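/- arXiv:2301.00586 — 3 statements merged into one kernel-verified Lean document; each statement's English description precedes it below -/
import Mathlib

section
/- For every z ∈ ℂ, neither 𝔭_z nor 𝔮_z belongs to D(T). -/
open Filter Topology MeasureTheory

noncomputable section

/-- Action of the Jacobi matrix `J` on a complex sequence:
`(Jc)ₙ = aₙ₋₁cₙ₋₁ + bₙcₙ + aₙcₙ₊₁` with `a₋₁ := 0`. -/
def jacobiMul (a b : ℕ → ℝ) (c : ℕ → ℂ) : ℕ → ℂ
  | 0 => (b 0 : ℂ) * c 0 + (a 0 : ℂ) * c 1
  | n + 1 => (a n : ℂ) * c n + (b (n + 1) : ℂ) * c (n + 1) + (a (n + 1) : ℂ) * c (n + 2)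

/-- `jacobiGraph a b f g` means: `f` belongs to the domain `D(T)` of the closure `T` of the
Jacobi matrix acting on the finitely supported sequences, and `T f = g`; i.e. there are
finitely supported sequences `u k → f` in `ℓ²` such that `J (u k) → g` in `ℓ²`. -/
def jacobiGraph (a b : ℕ → ℝ) (f g : ℕ → ℂ) : Prop :=
  ∃ u : ℕ → ℕ → ℂ,
    (∀ k, (Function.support (u k)).Finite) ∧
    (∀ k, Summable fun n => ‖u k n - f n‖ ^ 2) ∧
    Tendsto (fun k => ∑' n, ‖u k n - f n‖ ^ 2) atTop (𝓝 0) ∧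
    (∀ k, Summable fun n => ‖jacobiMul a b (u k) n - g n‖ ^ 2) ∧
    Tendsto (fun k => ∑' n, ‖jacobiMul a b (u k) n - g n‖ ^ 2) atTop (𝓝 0)

/-- Membership in the domain `D(T)` of the Jacobi operator. -/
def inDomT (a b : ℕ → ℝ) (f : ℕ → ℂ) : Prop := ∃ g, jacobiGraph a b f g

/-- The `ℓ²` norm of a complex sequence. -/
def l2norm (f : ℕ → ℂ) : ℝ := Real.sqrt (∑' n, ‖f n‖ ^ 2)

/-- The data of an indeterminate Hamburger moment problem: Jacobi parameters `a`, `b`,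
the orthonormal polynomials `p` and second-kind polynomials `q` (as entire functions),
determined by the three-term recurrence, together with the indeterminacy condition
`∑ₙ (|pₙ(z)|² + |qₙ(z)|²) < ∞` for all `z`. -/
structure JacobiSetup where
  a : ℕ → ℝ
  b : ℕ → ℝ
  ha : ∀ n, 0 < a n
  p : ℕ → ℂ → ℂ
  q : ℕ → ℂ → ℂ
  hp0 : ∀ z, p 0 z = 1
  hp1 : ∀ z, p 1 z = (z - (b 0 : ℂ)) / (a 0 : ℂ)
  hq0 : ∀ z, q 0 z = 0
  hq1 : ∀ z, q 1 z = 1 / (a 0 : ℂ)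
  hrecp : ∀ n z, z * p (n + 1) z =
    (a (n + 1) : ℂ) * p (n + 2) z + (b (n + 1) : ℂ) * p (n + 1) z + (a n : ℂ) * p n z
  hrecq : ∀ n z, z * q (n + 1) z =
    (a (n + 1) : ℂ) * q (n + 2) z + (b (n + 1) : ℂ) * q (n + 1) z + (a n : ℂ) * q n z
  indet : ∀ z : ℂ, Summable fun n => ‖p n z‖ ^ 2 + ‖q n z‖ ^ 2

/-- The Nevanlinna function `A(u,v)`. -/
def nevA (S : JacobiSetup) (u v : ℂ) : ℂ := (u - v) * ∑' k, S.q k u * S.q k v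
/-- The Nevanlinna function `B(u,v)`. -/
def nevB (S : JacobiSetup) (u v : ℂ) : ℂ := -1 + (u - v) * ∑' k, S.p k u * S.q k v
/-- The Nevanlinna function `C(u,v)`. -/
def nevC (S : JacobiSetup) (u v : ℂ) : ℂ := 1 + (u - v) * ∑' k, S.q k u * S.p k v
/-- The Nevanlinna function `D(u,v)`. -/
def nevD (S : JacobiSetup) (u v : ℂ) : ℂ := (u - v) * ∑' k, S.p k u * S.p k v

namespace JacobiAux

local notation "conj'" => (starRingEnd ℂ)

@[simp] lemma jacobiMul_zero' (a b : ℕ → ℝ) (c : ℕ → ℂ) :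
    jacobiMul a b c 0 = (b 0 : ℂ) * c 0 + (a 0 : ℂ) * c 1 := rfl
@[simp] lemma jacobiMul_succ' (a b : ℕ → ℝ) (c : ℕ → ℂ) (n : ℕ) :
    jacobiMul a b c (n+1) =
      (a n : ℂ) * c n + (b (n + 1) : ℂ) * c (n + 1) + (a (n + 1) : ℂ) * c (n + 2) := rfl

lemma pair_summable {x w : ℕ → ℂ} (hx : Summable fun n => ‖x n‖^2)
    (hw : Summable fun n => ‖w n‖^2) : Summable fun n => x n * conj' (w n) := by
  apply Summable.of_norm
  refine Summable.of_nonneg_of_le (fun n => norm_nonneg _) (fun n => ?_)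
    ((hx.add hw).mul_left (1/2))
  have : ‖x n * conj' (w n)‖ = ‖x n‖ * ‖w n‖ := by
    rw [norm_mul, RCLike.norm_conj]
  rw [this]
  nlinarith [sq_nonneg (‖x n‖ - ‖w n‖), norm_nonneg (x n), norm_nonneg (w n)]

lemma tsum_cs {x w : ℕ → ℂ} (hx : Summable fun n => ‖x n‖^2)
    (hw : Summable fun n => ‖w n‖^2) :
    ‖∑' n, x n * conj' (w n)‖ ≤
      Real.sqrt (∑' n, ‖x n‖^2) * Real.sqrt (∑' n, ‖w n‖^2) := by
  have h1 : ‖∑' n, x n * conj' (w n)‖ ≤ ∑' n, ‖x n‖ * ‖w n‖ := by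
    have := norm_tsum_le_tsum_norm (f := fun n => x n * conj' (w n)) ?_
    · refine this.trans_eq (tsum_congr fun n => ?_)
      rw [norm_mul, RCLike.norm_conj]
    · refine Summable.of_nonneg_of_le (fun n => norm_nonneg _) (fun n => ?_)
        ((hx.add hw).mul_left (1/2))
      have : ‖x n * conj' (w n)‖ = ‖x n‖ * ‖w n‖ := by rw [norm_mul, RCLike.norm_conj]
      rw [this]; nlinarith [sq_nonneg (‖x n‖ - ‖w n‖)]
  refine h1.trans ?_
  have hsum : Summable fun n => ‖x n‖ * ‖w n‖ := by
    refine Summable.of_nonneg_of_le (fun n => by positivity) (fun n => ?_)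
      ((hx.add hw).mul_left (1/2))
    nlinarith [sq_nonneg (‖x n‖ - ‖w n‖)]
  refine hsum.tsum_le_of_sum_le fun s => ?_
  have h2 := Finset.sum_mul_sq_le_sq_mul_sq s (fun n => ‖x n‖) (fun n => ‖w n‖)
  have h3 : ∑ n ∈ s, ‖x n‖^2 ≤ ∑' n, ‖x n‖^2 :=
    hx.sum_le_tsum s (fun n _ => by positivity)
  have h4 : ∑ n ∈ s, ‖w n‖^2 ≤ ∑' n, ‖w n‖^2 :=
    hw.sum_le_tsum s (fun n _ => by positivity)
  have h5 : (0:ℝ) ≤ ∑ n ∈ s, ‖x n‖ * ‖w n‖ := Finset.sum_nonneg fun n _ => by positivity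
  have h6 : (0:ℝ) ≤ ∑' n, ‖x n‖^2 := tsum_nonneg fun n => by positivity
  have h7 : (0:ℝ) ≤ ∑' n, ‖w n‖^2 := tsum_nonneg fun n => by positivity
  rw [← Real.sqrt_mul h6]
  refine (Real.le_sqrt h5 (by positivity)).mpr ?_
  nlinarith [Finset.sum_nonneg (s := s) (f := fun n => ‖x n‖^2) fun n _ => by positivity,
      Finset.sum_nonneg (s := s) (f := fun n => ‖w n‖^2) fun n _ => by positivity]

lemma coord_tendsto {x : ℕ → ℕ → ℂ} {f : ℕ → ℂ}
    (hs : ∀ k, Summable fun n => ‖x k n - f n‖^2)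
    (ht : Tendsto (fun k => ∑' n, ‖x k n - f n‖^2) atTop (𝓝 0)) (n : ℕ) :
    Tendsto (fun k => x k n) atTop (𝓝 (f n)) := by
  rw [tendsto_iff_dist_tendsto_zero]
  have hb : ∀ k, dist (x k n) (f n) ≤ Real.sqrt (∑' m, ‖x k m - f m‖^2) := by
    intro k
    rw [dist_eq_norm, show ‖x k n - f n‖ = Real.sqrt (‖x k n - f n‖^2) by
      rw [Real.sqrt_sq (norm_nonneg _)]]
    exact Real.sqrt_le_sqrt ((hs k).le_tsum n (fun m _ => by positivity))
  have h1 : Tendsto (fun k => Real.sqrt (∑' m, ‖x k m - f m‖^2)) atTop (𝓝 0) := by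
    have := (Real.continuous_sqrt.tendsto 0).comp ht
    simpa [Function.comp_def] using this
  exact squeeze_zero (fun k => dist_nonneg) hb h1

lemma wronskian (a b : ℕ → ℝ) (u w : ℕ → ℂ) (M : ℕ) :
    ∑ n ∈ Finset.range (M+1),
      (jacobiMul a b u n * conj' (w n) - u n * conj' (jacobiMul a b w n)) =
    (a M : ℂ) * (u (M+1) * conj' (w M) - u M * conj' (w (M+1))) := by
  induction M with
  | zero =>
    rw [Finset.sum_range_one]
    simp only [jacobiMul_zero', map_add, map_mul, Complex.conj_ofReal]
    ring
  | succ M ih =>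
    rw [Finset.sum_range_succ, ih]
    simp only [jacobiMul_succ', map_add, map_mul, Complex.conj_ofReal]
    ring

lemma symm_finite (a b : ℕ → ℝ) (u w : ℕ → ℂ) (M : ℕ) (hu : ∀ n, M ≤ n → u n = 0) :
    ∑' n, jacobiMul a b u n * conj' (w n) = ∑' n, u n * conj' (jacobiMul a b w n) := by
  have hJu : ∀ n, jacobiMul a b u n ≠ 0 → n ∈ Finset.range (M+1) := by
    intro n hn
    rw [Finset.mem_range]
    by_contra h
    push_neg at h
    apply hn
    match n, h with
    | (m+1), h =>
      have h1 : M ≤ m := by omega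
      rw [jacobiMul_succ', hu m h1, hu (m+1) (by omega), hu (m+2) (by omega)]
      ring
  rw [tsum_eq_sum (s := Finset.range (M+1)) (fun n hn => by
    rcases eq_or_ne (jacobiMul a b u n) 0 with h | h
    · rw [h, zero_mul]
    · exact absurd (hJu n h) hn)]
  rw [tsum_eq_sum (s := Finset.range (M+1)) (fun n hn => by
    have h2 : M ≤ n := by
      rw [Finset.mem_range] at hn; omega
    rw [hu n h2, zero_mul])]
  have h := wronskian a b u w M
  rw [hu M le_rfl, hu (M+1) (by omega)] at h
  simp only [zero_mul, mul_zero, sub_zero, zero_sub, neg_zero, mul_zero] at h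
  rw [Finset.sum_sub_distrib] at h
  exact sub_eq_zero.mp h

lemma supp_summable {u : ℕ → ℂ} (h : (Function.support u).Finite) :
    Summable fun n => ‖u n‖^2 := by
  apply summable_of_ne_finset_zero (s := h.toFinset)
  intro n hn
  have : u n = 0 := by
    by_contra h'
    exact hn (h.mem_toFinset.mpr h')
  simp [this]

lemma l2_limit {x f : ℕ → ℂ} (hx : Summable fun n => ‖x n‖^2)
    (hd : Summable fun n => ‖x n - f n‖^2) : Summable fun n => ‖f n‖^2 := by
  refine Summable.of_nonneg_of_le (fun n => by positivity) (fun n => ?_)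
    (((hd.add hx).mul_left 2))
  have h1 : ‖f n‖ ≤ ‖x n - f n‖ + ‖x n‖ := by
    calc ‖f n‖ = ‖x n - (x n - f n)‖ := by ring_nf
    _ ≤ ‖x n‖ + ‖x n - f n‖ := norm_sub_le _ _
    _ = ‖x n - f n‖ + ‖x n‖ := by ring
  nlinarith [sq_nonneg (‖x n - f n‖ - ‖x n‖), mul_self_le_mul_self (norm_nonneg (f n)) h1]

lemma pair_tendsto {x : ℕ → ℕ → ℂ} {f w : ℕ → ℂ}
    (hs : ∀ k, Summable fun n => ‖x k n - f n‖^2)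
    (ht : Tendsto (fun k => ∑' n, ‖x k n - f n‖^2) atTop (𝓝 0))
    (hxk : ∀ k, Summable fun n => ‖x k n‖^2)
    (hf : Summable fun n => ‖f n‖^2)
    (hw : Summable fun n => ‖w n‖^2) :
    Tendsto (fun k => ∑' n, x k n * conj' (w n)) atTop (𝓝 (∑' n, f n * conj' (w n))) := by
  rw [tendsto_iff_dist_tendsto_zero]
  have hb : ∀ k, dist (∑' n, x k n * conj' (w n)) (∑' n, f n * conj' (w n)) ≤
      Real.sqrt (∑' n, ‖x k n - f n‖^2) * Real.sqrt (∑' n, ‖w n‖^2) := by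
    intro k
    rw [dist_eq_norm, ← (pair_summable (hxk k) hw).tsum_sub (pair_summable hf hw)]
    have he : ∀ n, x k n * conj' (w n) - f n * conj' (w n) = (x k n - f n) * conj' (w n) := by
      intro n; ring
    simp_rw [he]
    exact tsum_cs (hs k) hw
  refine squeeze_zero (fun k => dist_nonneg) hb ?_
  have h1 : Tendsto (fun k => Real.sqrt (∑' n, ‖x k n - f n‖^2)) atTop (𝓝 0) := by
    have := (Real.continuous_sqrt.tendsto 0).comp ht
    simpa [Function.comp_def] using this
  simpa using h1.mul_const (Real.sqrt (∑' n, ‖w n‖^2))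

lemma supp_bound {u : ℕ → ℂ} (h : (Function.support u).Finite) :
    ∃ M, ∀ n, M ≤ n → u n = 0 := by
  refine ⟨(h.toFinset.sup id) + 1, fun n hn => ?_⟩
  by_contra h'
  have hm : n ∈ h.toFinset := h.mem_toFinset.mpr h'
  have h2 := Finset.le_sup (f := id) hm
  simp only [id] at h2
  omega

lemma jacobi_supp_summable (a b : ℕ → ℝ) {u : ℕ → ℂ} (h : (Function.support u).Finite) :
    Summable fun n => ‖jacobiMul a b u n‖^2 := by
  obtain ⟨M, hM⟩ := supp_bound h
  apply supp_summable
  refine Set.Finite.subset (Set.finite_Iio (M+1)) ?_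
  intro n hn
  simp only [Set.mem_Iio]
  by_contra hc
  push_neg at hc
  apply hn
  match n, hc with
  | (m+1), hc =>
    have h1 : M ≤ m := by omega
    show jacobiMul a b u (m+1) = 0
    rw [jacobiMul_succ', hM m h1, hM (m+1) (by omega), hM (m+2) (by omega)]
    ring

lemma graph_fun {a b : ℕ → ℝ} {f g : ℕ → ℂ} (h : jacobiGraph a b f g) :
    ∀ n, g n = jacobiMul a b f n := by
  obtain ⟨u, hfin, hs, ht, hs', ht'⟩ := h
  intro n
  have hc : ∀ m, Tendsto (fun k => u k m) atTop (𝓝 (f m)) := coord_tendsto hs ht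
  have hg : Tendsto (fun k => jacobiMul a b (u k) n) atTop (𝓝 (g n)) := coord_tendsto hs' ht' n
  have hJ : Tendsto (fun k => jacobiMul a b (u k) n) atTop (𝓝 (jacobiMul a b f n)) := by
    match n with
    | 0 =>
      simp only [jacobiMul_zero']
      exact ((hc 0).const_mul _).add ((hc 1).const_mul _)
    | m+1 =>
      simp only [jacobiMul_succ']
      exact (((hc m).const_mul _).add ((hc (m+1)).const_mul _)).add ((hc (m+2)).const_mul _)
  exact tendsto_nhds_unique hg hJ

lemma graph_key {a b : ℕ → ℝ} {f g w : ℕ → ℂ} (h : jacobiGraph a b f g)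
    (hw : Summable fun n => ‖w n‖^2)
    (hJw : Summable fun n => ‖jacobiMul a b w n‖^2) :
    ∑' n, g n * conj' (w n) = ∑' n, f n * conj' (jacobiMul a b w n) := by
  obtain ⟨u, hfin, hs, ht, hs', ht'⟩ := h
  have hsupu : ∀ k, Summable fun n => ‖u k n‖^2 := fun k => supp_summable (hfin k)
  have hsupJ : ∀ k, Summable fun n => ‖jacobiMul a b (u k) n‖^2 :=
    fun k => jacobi_supp_summable a b (hfin k)
  have hf : Summable fun n => ‖f n‖^2 := l2_limit (hsupu 0) (hs 0)
  have hg : Summable fun n => ‖g n‖^2 := l2_limit (hsupJ 0) (hs' 0)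
  have hL : Tendsto (fun k => ∑' n, jacobiMul a b (u k) n * conj' (w n)) atTop
      (𝓝 (∑' n, g n * conj' (w n))) := pair_tendsto hs' ht' hsupJ hg hw
  have hR : Tendsto (fun k => ∑' n, u k n * conj' (jacobiMul a b w n)) atTop
      (𝓝 (∑' n, f n * conj' (jacobiMul a b w n))) := pair_tendsto hs ht hsupu hf hJw
  refine tendsto_nhds_unique (f := fun k => ∑' n, jacobiMul a b (u k) n * conj' (w n)) hL ?_
  refine hR.congr fun k => ?_
  obtain ⟨M, hM⟩ := supp_bound (hfin k)
  exact (symm_finite a b (u k) w M hM).symm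

end JacobiAux

open JacobiAux

/-- For every `z ∈ ℂ`, neither `𝔭_z` nor `𝔮_z` belongs to `D(T)`. -/
theorem stmt0 (S : JacobiSetup) (z : ℂ) :
    ¬ inDomT S.a S.b (fun n => S.p n z) ∧ ¬ inDomT S.a S.b (fun n => S.q n z) := by
  have ha0 : ((S.a 0 : ℂ)) ≠ 0 := by
    exact_mod_cast Complex.ofReal_ne_zero.mpr (S.ha 0).ne'
  have hp2 : ∀ v : ℂ, Summable fun n => ‖S.p n v‖^2 := fun v =>
    Summable.of_nonneg_of_le (fun n => by positivity)
      (fun n => by nlinarith [sq_nonneg ‖S.q n v‖]) (S.indet v)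
  have hq2 : ∀ v : ℂ, Summable fun n => ‖S.q n v‖^2 := fun v =>
    Summable.of_nonneg_of_le (fun n => by positivity)
      (fun n => by nlinarith [sq_nonneg ‖S.p n v‖]) (S.indet v)
  -- the action of J on p and q
  have hJp : ∀ v : ℂ, ∀ n, jacobiMul S.a S.b (fun m => S.p m v) n = v * S.p n v := by
    intro v n
    match n with
    | 0 =>
      rw [jacobiMul_zero' S.a S.b (fun m => S.p m v)]
      simp only [S.hp0, S.hp1]
      field_simp
      ring
    | m+1 =>
      rw [jacobiMul_succ' S.a S.b (fun m => S.p m v)]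
      linear_combination (-1 : ℂ) * S.hrecp m v
  have hJq : ∀ v : ℂ, ∀ n, jacobiMul S.a S.b (fun m => S.q m v) n =
      v * S.q n v + (if n = 0 then 1 else 0) := by
    intro v n
    match n with
    | 0 =>
      rw [jacobiMul_zero' S.a S.b (fun m => S.q m v)]
      simp only [S.hq0, S.hq1, if_pos rfl]
      field_simp
      simp
    | m+1 =>
      rw [jacobiMul_succ' S.a S.b (fun m => S.q m v)]
      simp only [if_neg (Nat.succ_ne_zero m)]
      linear_combination (-1 : ℂ) * S.hrecq m v
  set zb := (starRingEnd ℂ) z with hzb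
  -- summability of J applied to p_zb and q_zb
  have hJp2 : Summable fun n => ‖jacobiMul S.a S.b (fun m => S.p m zb) n‖^2 := by
    refine Summable.of_nonneg_of_le (fun n => by positivity) (fun n => ?_)
      (((hp2 zb).mul_left (‖zb‖^2)))
    rw [hJp zb n, norm_mul, mul_pow]
  have hJq2 : Summable fun n => ‖jacobiMul S.a S.b (fun m => S.q m zb) n‖^2 := by
    have hdelta : Summable fun n : ℕ => (2 : ℝ) * (if n = 0 then 1 else 0) := by
      apply summable_of_ne_finset_zero (s := {0})
      intro n hn
      simp only [Finset.mem_singleton] at hn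
      simp [hn]
    refine Summable.of_nonneg_of_le (fun n => by positivity) (fun n => ?_)
      ((((hq2 zb).mul_left (2 * ‖zb‖^2)).add hdelta))
    rw [hJq zb n]
    have h1 : ‖zb * S.q n zb + (if n = 0 then 1 else 0)‖ ≤
        ‖zb‖ * ‖S.q n zb‖ + ‖(if n = 0 then (1:ℂ) else 0)‖ := by
      refine (norm_add_le _ _).trans ?_
      rw [norm_mul]
    have h2 : ‖(if n = 0 then (1:ℂ) else 0)‖^2 = (if n = 0 then (1:ℝ) else 0) := by
      by_cases h : n = 0 <;> simp [h]
    nlinarith [sq_nonneg (‖zb‖ * ‖S.q n zb‖ - ‖(if n = 0 then (1:ℂ) else 0)‖),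
      norm_nonneg (zb * S.q n zb + (if n = 0 then (1:ℂ) else 0)),
      mul_self_le_mul_self (norm_nonneg (zb * S.q n zb + (if n = 0 then (1:ℂ) else 0))) h1,
      norm_nonneg (if n = 0 then (1:ℂ) else 0), norm_nonneg (zb * S.q n zb)]
  -- conj facts
  have hconjz : (starRingEnd ℂ) zb = z := by rw [hzb, Complex.conj_conj]
  constructor
  · rintro ⟨g, hg⟩
    have hgf := graph_fun hg
    have key := graph_key hg (hq2 zb) hJq2
    -- LHS : ∑' g n * conj (q n zb) = z * P
    set P := ∑' n, S.p n z * (starRingEnd ℂ) (S.q n zb) with hP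
    have hLHS : ∑' n, g n * (starRingEnd ℂ) (S.q n zb) = z * P := by
      rw [← tsum_mul_left]
      congr 1
      funext n
      rw [hgf n, hJp z n]
      ring
    have hRHS : ∑' n, S.p n z * (starRingEnd ℂ) (jacobiMul S.a S.b (fun m => S.q m zb) n)
        = z * P + 1 := by
      have he : ∀ n, S.p n z * (starRingEnd ℂ) (jacobiMul S.a S.b (fun m => S.q m zb) n)
          = z * (S.p n z * (starRingEnd ℂ) (S.q n zb))
            + S.p n z * (if n = 0 then 1 else 0) := by
        intro n
        rw [hJq zb n, map_add, map_mul, hconjz]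
        have : (starRingEnd ℂ) (if n = 0 then (1:ℂ) else 0) = (if n = 0 then (1:ℂ) else 0) := by
          by_cases h : n = 0 <;> simp [h]
        rw [this]
        ring
      simp_rw [he]
      rw [Summable.tsum_add (((pair_summable (hp2 z) (hq2 zb))).mul_left z) ?_]
      · congr 1
        · exact tsum_mul_left
        · rw [tsum_eq_single 0 (fun n hn => by simp [hn])]
          simp [S.hp0]
      · apply summable_of_ne_finset_zero (s := {0})
        intro n hn
        simp only [Finset.mem_singleton] at hn
        simp [hn]
    rw [hLHS, hRHS] at key
    exact one_ne_zero (by linear_combination -key)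
  · rintro ⟨g, hg⟩
    have hgf := graph_fun hg
    have key := graph_key hg (hp2 zb) hJp2
    set Q := ∑' n, S.q n z * (starRingEnd ℂ) (S.p n zb) with hQ
    have hLHS : ∑' n, g n * (starRingEnd ℂ) (S.p n zb) = z * Q + 1 := by
      have he : ∀ n, g n * (starRingEnd ℂ) (S.p n zb)
          = z * (S.q n z * (starRingEnd ℂ) (S.p n zb))
            + (if n = 0 then 1 else 0) * (starRingEnd ℂ) (S.p n zb) := by
        intro n
        rw [hgf n, hJq z n]
        ring
      simp_rw [he]
      rw [Summable.tsum_add (((pair_summable (hq2 z) (hp2 zb))).mul_left z) ?_]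
      · congr 1
        · exact tsum_mul_left
        · rw [tsum_eq_single 0 (fun n hn => by simp [hn])]
          simp [S.hp0, hzb]
      · apply summable_of_ne_finset_zero (s := {0})
        intro n hn
        simp only [Finset.mem_singleton] at hn
        simp [hn]
    have hRHS : ∑' n, S.q n z * (starRingEnd ℂ) (jacobiMul S.a S.b (fun m => S.p m zb) n)
        = z * Q := by
      rw [← tsum_mul_left]
      congr 1
      funext n
      rw [hJp zb n, map_mul, hconjz]
      ring
    rw [hLHS, hRHS] at key
    exact one_ne_zero (by linear_combination key)
end
end

section
/- Let u, v ∈ ℂ. There exists α ∈ ℂ such that 𝔭_u + α·𝔭_v ∈ D(T) if and only if D(u,v) = 0, and in the affirmative case α is uniquely determined and equals B(u,v). -/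
open Filter Topology MeasureTheory

noncomputable section

/- ## Elementary ℓ² lemmas -/

lemma sq_term_le {x y : ℝ} (hx : 0 ≤ x) (hy : 0 ≤ y) : x * y ≤ (x ^ 2 + y ^ 2) / 2 := by
  nlinarith [sq_nonneg (x - y)]

lemma real_cs_summable {F G : ℕ → ℝ} (hF : Summable fun n => F n ^ 2)
    (hG : Summable fun n => G n ^ 2) (hF0 : ∀ n, 0 ≤ F n) (hG0 : ∀ n, 0 ≤ G n) :
    Summable fun n => F n * G n := by
  refine Summable.of_nonneg_of_le (fun n => mul_nonneg (hF0 n) (hG0 n))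
    (fun n => sq_term_le (hF0 n) (hG0 n)) ?_
  exact (hF.add hG).div_const 2

lemma real_cs_bound {F G : ℕ → ℝ} (hF : Summable fun n => F n ^ 2)
    (hG : Summable fun n => G n ^ 2) (hF0 : ∀ n, 0 ≤ F n) (hG0 : ∀ n, 0 ≤ G n) :
    ∑' n, F n * G n ≤ Real.sqrt (∑' n, F n ^ 2) * Real.sqrt (∑' n, G n ^ 2) := by
  refine Summable.tsum_le_of_sum_le (real_cs_summable hF hG hF0 hG0) (fun s => ?_)
  calc ∑ i ∈ s, F i * G i
      ≤ Real.sqrt (∑ i ∈ s, F i ^ 2) * Real.sqrt (∑ i ∈ s, G i ^ 2) :=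
        Real.sum_mul_le_sqrt_mul_sqrt s F G
    _ ≤ Real.sqrt (∑' n, F n ^ 2) * Real.sqrt (∑' n, G n ^ 2) := by
        gcongr <;>
          [exact Summable.sum_le_tsum s (fun n _ => sq_nonneg _) hF;
           exact Summable.sum_le_tsum s (fun n _ => sq_nonneg _) hG]

lemma summable_norm_mul {f g : ℕ → ℂ} (hf : Summable fun n => ‖f n‖ ^ 2)
    (hg : Summable fun n => ‖g n‖ ^ 2) : Summable fun n => ‖f n‖ * ‖g n‖ :=
  real_cs_summable hf hg (fun n => norm_nonneg _) (fun n => norm_nonneg _)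

lemma summable_mul {f g : ℕ → ℂ} (hf : Summable fun n => ‖f n‖ ^ 2)
    (hg : Summable fun n => ‖g n‖ ^ 2) : Summable fun n => f n * g n := by
  refine Summable.of_norm ?_
  simpa [norm_mul] using summable_norm_mul hf hg

lemma cs_bound {f g : ℕ → ℂ} (hf : Summable fun n => ‖f n‖ ^ 2)
    (hg : Summable fun n => ‖g n‖ ^ 2) :
    ‖∑' n, f n * g n‖ ≤ Real.sqrt (∑' n, ‖f n‖ ^ 2) * Real.sqrt (∑' n, ‖g n‖ ^ 2) := by
  have h1 : ‖∑' n, f n * g n‖ ≤ ∑' n, ‖f n * g n‖ :=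
    norm_tsum_le_tsum_norm (by simpa [norm_mul] using summable_norm_mul hf hg)
  refine h1.trans ?_
  simp only [norm_mul]
  exact real_cs_bound hf hg (fun n => norm_nonneg _) (fun n => norm_nonneg _)

lemma summable_sq_add {x y : ℕ → ℂ} (hx : Summable fun n => ‖x n‖ ^ 2)
    (hy : Summable fun n => ‖y n‖ ^ 2) : Summable fun n => ‖x n + y n‖ ^ 2 := by
  refine Summable.of_nonneg_of_le (fun n => sq_nonneg _) (fun n => ?_)
    (((hx.mul_left 2).add (hy.mul_left 2)))
  have h2 : ‖x n + y n‖ ^ 2 ≤ (‖x n‖ + ‖y n‖) ^ 2 :=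
    pow_le_pow_left₀ (norm_nonneg _) (norm_add_le _ _) 2
  nlinarith [sq_nonneg (‖x n‖ - ‖y n‖)]

lemma l2_mink {x y : ℕ → ℂ} (hx : Summable fun n => ‖x n‖ ^ 2)
    (hy : Summable fun n => ‖y n‖ ^ 2) :
    Real.sqrt (∑' n, ‖x n + y n‖ ^ 2) ≤
      Real.sqrt (∑' n, ‖x n‖ ^ 2) + Real.sqrt (∑' n, ‖y n‖ ^ 2) := by
  set A := ∑' n, ‖x n‖ ^ 2 with hA
  set B := ∑' n, ‖y n‖ ^ 2 with hB
  have hA0 : 0 ≤ A := tsum_nonneg (fun n => sq_nonneg _)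
  have hB0 : 0 ≤ B := tsum_nonneg (fun n => sq_nonneg _)
  have key : ∑' n, ‖x n + y n‖ ^ 2 ≤ (Real.sqrt A + Real.sqrt B) ^ 2 := by
    have hs2 : Summable fun n => ‖x n‖ ^ 2 + 2 * (‖x n‖ * ‖y n‖) + ‖y n‖ ^ 2 :=
      (hx.add ((summable_norm_mul hx hy).mul_left 2)).add hy
    have h1 : ∑' n, ‖x n + y n‖ ^ 2 ≤
        ∑' n, (‖x n‖ ^ 2 + 2 * (‖x n‖ * ‖y n‖) + ‖y n‖ ^ 2) := by
      refine Summable.tsum_le_tsum (fun n => ?_) (summable_sq_add hx hy) hs2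
      have h2 : ‖x n + y n‖ ^ 2 ≤ (‖x n‖ + ‖y n‖) ^ 2 :=
        pow_le_pow_left₀ (norm_nonneg _) (norm_add_le _ _) 2
      nlinarith [h2]
    have h2 : ∑' n, (‖x n‖ ^ 2 + 2 * (‖x n‖ * ‖y n‖) + ‖y n‖ ^ 2)
        = A + 2 * ∑' n, ‖x n‖ * ‖y n‖ + B := by
      rw [Summable.tsum_add (hx.add ((summable_norm_mul hx hy).mul_left 2)) hy,
        Summable.tsum_add hx ((summable_norm_mul hx hy).mul_left 2), tsum_mul_left]
    have h3 : ∑' n, ‖x n‖ * ‖y n‖ ≤ Real.sqrt A * Real.sqrt B :=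
      real_cs_bound hx hy (fun n => norm_nonneg _) (fun n => norm_nonneg _)
    have h4 : (Real.sqrt A + Real.sqrt B) ^ 2
        = A + 2 * (Real.sqrt A * Real.sqrt B) + B := by
      rw [add_sq, Real.sq_sqrt hA0, Real.sq_sqrt hB0]; ring
    linarith
  calc Real.sqrt (∑' n, ‖x n + y n‖ ^ 2) ≤ Real.sqrt ((Real.sqrt A + Real.sqrt B) ^ 2) :=
        Real.sqrt_le_sqrt key
    _ = Real.sqrt A + Real.sqrt B := Real.sqrt_sq (add_nonneg (Real.sqrt_nonneg _) (Real.sqrt_nonneg _))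

lemma tail_tendsto {g : ℕ → ℝ} (hg : Summable g) (h0 : ∀ n, 0 ≤ g n) :
    Tendsto (fun N => ∑' n, if N < n then g n else 0) atTop (𝓝 0) := by
  have key : ∀ N : ℕ, ∑' n, (if N < n then g n else 0)
      = (∑' n, g n) - ∑ n ∈ Finset.range (N + 1), g n := by
    intro N
    have hsplit : ∀ n, g n = (if N < n then g n else 0) + (if N < n then 0 else g n) := by
      intro n; split_ifs <;> ring
    have h1 : Summable fun n => if N < n then g n else 0 :=
      hg.of_nonneg_of_le (fun n => by split_ifs <;> simp [h0 n]) (fun n => by split_ifs <;> simp [h0 n])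
    have h2 : ∑' n, (if N < n then 0 else g n) = ∑ n ∈ Finset.range (N + 1), g n := by
      rw [tsum_eq_sum (s := Finset.range (N + 1))]
      · refine Finset.sum_congr rfl (fun n hn => ?_)
        rw [Finset.mem_range] at hn
        rw [if_neg (by omega)]
      · intro n hn
        rw [Finset.mem_range] at hn
        rw [if_pos (by omega)]
    have h3 : Summable fun n => if N < n then 0 else g n :=
      summable_of_ne_finset_zero (s := Finset.range (N + 1)) (fun n hn => by
        rw [Finset.mem_range] at hn; rw [if_pos (by omega)])
    have := Summable.tsum_add h1 h3
    rw [← tsum_congr hsplit] at this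
    rw [h2] at this
    linarith [this]
  simp only [key]
  have hps : Tendsto (fun N => ∑ n ∈ Finset.range (N + 1), g n) atTop (𝓝 (∑' n, g n)) :=
    hg.hasSum.tendsto_sum_nat.comp (tendsto_add_atTop_nat 1)
  have : Tendsto (fun N => (∑' n, g n) - ∑ n ∈ Finset.range (N + 1), g n) atTop
      (𝓝 ((∑' n, g n) - ∑' n, g n)) := tendsto_const_nhds.sub hps
  simpa using this

/- ## Green's formula and pairing -/

lemma green (a b : ℕ → ℝ) (c d : ℕ → ℂ) (N : ℕ) :
    ∑ n ∈ Finset.range (N + 1), (jacobiMul a b c n * d n - c n * jacobiMul a b d n)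
      = (a N : ℂ) * (c (N + 1) * d N - c N * d (N + 1)) := by
  induction N with
  | zero => simp [jacobiMul]; ring
  | succ N ih =>
      rw [Finset.sum_range_succ, ih]
      show _ + (jacobiMul a b c (N + 1) * d (N + 1) - c (N + 1) * jacobiMul a b d (N + 1)) = _
      simp only [jacobiMul]
      ring

lemma jacobiMul_eventually_zero {a b : ℕ → ℝ} {c : ℕ → ℂ} {N : ℕ}
    (hc : ∀ n, N ≤ n → c n = 0) : ∀ n, N + 1 ≤ n → jacobiMul a b c n = 0 := by
  intro n hn
  match n, hn with
  | (m + 1), hn =>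
      show (a m : ℂ) * c m + (b (m + 1) : ℂ) * c (m + 1) + (a (m + 1) : ℂ) * c (m + 2) = 0
      rw [hc m (by omega), hc (m + 1) (by omega), hc (m + 2) (by omega)]
      ring

lemma pairing_finsupp (a b : ℕ → ℝ) {c : ℕ → ℂ} (hc : (Function.support c).Finite)
    (d : ℕ → ℂ) :
    ∑' n, jacobiMul a b c n * d n = ∑' n, c n * jacobiMul a b d n := by
  obtain ⟨N, hN⟩ : ∃ N : ℕ, ∀ n, N ≤ n → c n = 0 := by
    obtain ⟨M, hM⟩ := hc.toFinset.exists_nat_subset_range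
    refine ⟨M, fun n hn => ?_⟩
    by_contra h
    have : n ∈ hc.toFinset := by simpa [Function.mem_support] using h
    have := hM this
    simp only [Finset.mem_range] at this
    omega
  have h1 : ∑' n, jacobiMul a b c n * d n
      = ∑ n ∈ Finset.range (N + 2), jacobiMul a b c n * d n := by
    refine tsum_eq_sum (fun n hn => ?_)
    rw [Finset.mem_range] at hn
    rw [jacobiMul_eventually_zero hN n (by omega), zero_mul]
  have h2 : ∑' n, c n * jacobiMul a b d n
      = ∑ n ∈ Finset.range (N + 2), c n * jacobiMul a b d n := by
    refine tsum_eq_sum (fun n hn => ?_)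
    rw [Finset.mem_range] at hn
    rw [hN n (by omega), zero_mul]
  rw [h1, h2, ← sub_eq_zero, ← Finset.sum_sub_distrib]
  have := green a b c d (N + 1)
  rw [this, hN (N + 1) (by omega), hN (N + 2) (by omega)]
  ring

/- ## Coordinatewise limits -/

lemma coord_tendsto {h : ℕ → ℕ → ℂ} {w : ℕ → ℂ}
    (hs : ∀ k, Summable fun n => ‖h k n - w n‖ ^ 2)
    (ht : Tendsto (fun k => ∑' n, ‖h k n - w n‖ ^ 2) atTop (𝓝 0)) (m : ℕ) :
    Tendsto (fun k => h k m) atTop (𝓝 (w m)) := by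
  have hb : ∀ k, ‖h k m - w m‖ ^ 2 ≤ ∑' n, ‖h k n - w n‖ ^ 2 := fun k =>
    Summable.le_tsum (hs k) m (fun j _ => sq_nonneg _)
  have hsq : Tendsto (fun k => ‖h k m - w m‖ ^ 2) atTop (𝓝 0) :=
    squeeze_zero (fun k => sq_nonneg _) hb ht
  have hn : Tendsto (fun k => ‖h k m - w m‖) atTop (𝓝 0) := by
    have : Tendsto (fun k => Real.sqrt (‖h k m - w m‖ ^ 2)) atTop (𝓝 (Real.sqrt 0)) :=
      (Real.continuous_sqrt.tendsto 0).comp hsq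
    simpa [Real.sqrt_sq (norm_nonneg _)] using this
  rw [tendsto_iff_norm_sub_tendsto_zero]
  simpa using hn

lemma sq_summable_of_support {c : ℕ → ℂ} (hc : (Function.support c).Finite) :
    Summable fun n => ‖c n‖ ^ 2 := by
  refine summable_of_ne_finset_zero (s := hc.toFinset) (fun n hn => ?_)
  have : c n = 0 := by
    by_contra h
    exact hn (by simpa [Function.mem_support] using h)
  simp [this]

lemma sq_summable_of_approx {c f : ℕ → ℂ} (hfin : (Function.support c).Finite)
    (hs : Summable fun n => ‖c n - f n‖ ^ 2) : Summable fun n => ‖f n‖ ^ 2 := by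
  have hs' : Summable fun n => ‖-(c n - f n)‖ ^ 2 := by
    simpa only [norm_neg] using hs
  have h1 : Summable fun n => ‖-(c n - f n) + c n‖ ^ 2 :=
    summable_sq_add hs' (sq_summable_of_support hfin)
  convert h1 using 2 with n
  ring_nf

lemma support_bound {c : ℕ → ℂ} (hc : (Function.support c).Finite) :
    ∃ N : ℕ, ∀ n, N ≤ n → c n = 0 := by
  obtain ⟨M, hM⟩ := hc.toFinset.exists_nat_subset_range
  refine ⟨M, fun n hn => ?_⟩
  by_contra h
  have : n ∈ hc.toFinset := by simpa [Function.mem_support] using h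
  have := hM this
  simp only [Finset.mem_range] at this
  omega

lemma graph_pairing {a b : ℕ → ℝ} {f g d : ℕ → ℂ} (h : jacobiGraph a b f g)
    (hd : Summable fun n => ‖d n‖ ^ 2) (hd2 : Summable fun n => ‖jacobiMul a b d n‖ ^ 2) :
    ∑' n, g n * d n = ∑' n, f n * jacobiMul a b d n := by
  obtain ⟨uu, hfin, hsf, htf, hsg, htg⟩ := h
  have hJfin : ∀ k, (Function.support (jacobiMul a b (uu k))).Finite := by
    intro k
    obtain ⟨N, hN⟩ := support_bound (hfin k)
    refine Set.Finite.subset (Set.finite_Iio (N + 1)) (fun n hn => ?_)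
    simp only [Function.mem_support] at hn
    by_contra hcon
    simp only [Set.mem_Iio, not_lt] at hcon
    exact hn (jacobiMul_eventually_zero hN n hcon)
  have hg2 : Summable fun n => ‖g n‖ ^ 2 := sq_summable_of_approx (hJfin 0) (hsg 0)
  have hf2 : Summable fun n => ‖f n‖ ^ 2 := sq_summable_of_approx (hfin 0) (hsf 0)
  have key : ∀ k, ∑' n, jacobiMul a b (uu k) n * d n = ∑' n, uu k n * jacobiMul a b d n :=
    fun k => pairing_finsupp a b (hfin k) d
  have hL1 : Tendsto (fun k => ∑' n, jacobiMul a b (uu k) n * d n) atTop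
      (𝓝 (∑' n, g n * d n)) := by
    have hrw : ∀ k, ∑' n, jacobiMul a b (uu k) n * d n
        = (∑' n, (jacobiMul a b (uu k) n - g n) * d n) + ∑' n, g n * d n := by
      intro k
      rw [← Summable.tsum_add (summable_mul (hsg k) hd) (summable_mul hg2 hd)]
      exact tsum_congr (fun n => by ring)
    simp only [hrw]
    have h0 : Tendsto (fun k => ∑' n, (jacobiMul a b (uu k) n - g n) * d n) atTop (𝓝 0) := by
      refine squeeze_zero_norm (fun k => cs_bound (hsg k) hd) ?_
      have h1 : Tendsto (fun k => Real.sqrt (∑' n, ‖jacobiMul a b (uu k) n - g n‖ ^ 2)) atTop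
          (𝓝 (Real.sqrt 0)) := (Real.continuous_sqrt.tendsto 0).comp htg
      simpa using h1.mul_const (Real.sqrt (∑' n, ‖d n‖ ^ 2))
    simpa using h0.add_const (∑' n, g n * d n)
  have hL2 : Tendsto (fun k => ∑' n, uu k n * jacobiMul a b d n) atTop
      (𝓝 (∑' n, f n * jacobiMul a b d n)) := by
    have hrw : ∀ k, ∑' n, uu k n * jacobiMul a b d n
        = (∑' n, (uu k n - f n) * jacobiMul a b d n) + ∑' n, f n * jacobiMul a b d n := by
      intro k
      rw [← Summable.tsum_add (summable_mul (hsf k) hd2) (summable_mul hf2 hd2)]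
      exact tsum_congr (fun n => by ring)
    simp only [hrw]
    have h0 : Tendsto (fun k => ∑' n, (uu k n - f n) * jacobiMul a b d n) atTop (𝓝 0) := by
      refine squeeze_zero_norm (fun k => cs_bound (hsf k) hd2) ?_
      have h1 : Tendsto (fun k => Real.sqrt (∑' n, ‖uu k n - f n‖ ^ 2)) atTop
          (𝓝 (Real.sqrt 0)) := (Real.continuous_sqrt.tendsto 0).comp htf
      simpa using h1.mul_const (Real.sqrt (∑' n, ‖jacobiMul a b d n‖ ^ 2))
    simpa using h0.add_const (∑' n, f n * jacobiMul a b d n)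
  have hL1' : Tendsto (fun k => ∑' n, uu k n * jacobiMul a b d n) atTop
      (𝓝 (∑' n, g n * d n)) := by
    simpa only [key] using hL1
  exact tendsto_nhds_unique hL1' hL2

lemma graph_pointwise {a b : ℕ → ℝ} {f g : ℕ → ℂ} (h : jacobiGraph a b f g) :
    ∀ n, g n = jacobiMul a b f n := by
  obtain ⟨uu, hfin, hsf, htf, hsg, htg⟩ := h
  intro n
  have h1 : Tendsto (fun k => jacobiMul a b (uu k) n) atTop (𝓝 (g n)) :=
    coord_tendsto hsg htg n
  have h2 : Tendsto (fun k => jacobiMul a b (uu k) n) atTop (𝓝 (jacobiMul a b f n)) := by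
    have hc : ∀ m, Tendsto (fun k => uu k m) atTop (𝓝 (f m)) := coord_tendsto hsf htf
    match n with
    | 0 =>
        show Tendsto (fun k => (b 0 : ℂ) * uu k 0 + (a 0 : ℂ) * uu k 1) atTop _
        exact (((hc 0).const_mul _).add ((hc 1).const_mul _))
    | (m + 1) =>
        show Tendsto (fun k => (a m : ℂ) * uu k m + (b (m + 1) : ℂ) * uu k (m + 1)
          + (a (m + 1) : ℂ) * uu k (m + 2)) atTop _
        exact ((((hc m).const_mul _).add ((hc (m + 1)).const_mul _)).add
          ((hc (m + 2)).const_mul _))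
  exact tendsto_nhds_unique h1 h2

lemma graph_f_sq_summable {a b : ℕ → ℝ} {f g : ℕ → ℂ} (h : jacobiGraph a b f g) :
    Summable fun n => ‖f n‖ ^ 2 := by
  obtain ⟨uu, hfin, hsf, _, _, _⟩ := h
  exact sq_summable_of_approx (hfin 0) (hsf 0)

/- ## Setup-specific lemmas -/

lemma summable_sq_p (S : JacobiSetup) (z : ℂ) : Summable fun n => ‖S.p n z‖ ^ 2 :=
  (S.indet z).of_nonneg_of_le (fun n => sq_nonneg _)
    (fun n => le_add_of_nonneg_right (sq_nonneg _))

lemma summable_sq_q (S : JacobiSetup) (z : ℂ) : Summable fun n => ‖S.q n z‖ ^ 2 :=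
  (S.indet z).of_nonneg_of_le (fun n => sq_nonneg _)
    (fun n => le_add_of_nonneg_left (sq_nonneg _))

lemma jacP (S : JacobiSetup) (z : ℂ) (n : ℕ) :
    jacobiMul S.a S.b (fun m => S.p m z) n = z * S.p n z := by
  match n with
  | 0 =>
      show (S.b 0 : ℂ) * S.p 0 z + (S.a 0 : ℂ) * S.p 1 z = z * S.p 0 z
      rw [S.hp0, S.hp1]
      have ha : (S.a 0 : ℂ) ≠ 0 := by
        simpa using (S.ha 0).ne'
      field_simp
      ring
  | (m + 1) =>
      show (S.a m : ℂ) * S.p m z + (S.b (m + 1) : ℂ) * S.p (m + 1) z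
        + (S.a (m + 1) : ℂ) * S.p (m + 2) z = z * S.p (m + 1) z
      have := S.hrecp m z
      linear_combination -this

lemma jacQ (S : JacobiSetup) (z : ℂ) (n : ℕ) :
    jacobiMul S.a S.b (fun m => S.q m z) n = z * S.q n z + if n = 0 then 1 else 0 := by
  match n with
  | 0 =>
      show (S.b 0 : ℂ) * S.q 0 z + (S.a 0 : ℂ) * S.q 1 z = z * S.q 0 z + 1
      rw [S.hq0, S.hq1]
      have ha : (S.a 0 : ℂ) ≠ 0 := by simpa using (S.ha 0).ne'
      field_simp
      ring
  | (m + 1) =>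
      show (S.a m : ℂ) * S.q m z + (S.b (m + 1) : ℂ) * S.q (m + 1) z
        + (S.a (m + 1) : ℂ) * S.q (m + 2) z = z * S.q (m + 1) z + 0
      have := S.hrecq m z
      rw [add_zero]
      linear_combination -this

lemma wron (S : JacobiSetup) (v : ℂ) :
    ∀ n, (S.a n : ℂ) * (S.p n v * S.q (n + 1) v - S.p (n + 1) v * S.q n v) = 1 := by
  intro n
  induction n with
  | zero =>
      rw [S.hp0, S.hq0, S.hq1]
      have ha : (S.a 0 : ℂ) ≠ 0 := by simpa using (S.ha 0).ne'
      field_simp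
      ring
  | succ n ih =>
      have hp := S.hrecp n v
      have hq := S.hrecq n v
      linear_combination ih - S.p (n + 1) v * hq + S.q (n + 1) v * hp

lemma cdPP (S : JacobiSetup) (u v : ℂ) (N : ℕ) :
    (u - v) * ∑ k ∈ Finset.range (N + 1), S.p k u * S.p k v
      = (S.a N : ℂ) * (S.p (N + 1) u * S.p N v - S.p N u * S.p (N + 1) v) := by
  have hg := green S.a S.b (fun m => S.p m u) (fun m => S.p m v) N
  simp only [jacP] at hg
  rw [← hg, Finset.mul_sum]
  exact Finset.sum_congr rfl (fun k _ => by ring)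

lemma cdPQ (S : JacobiSetup) (u v : ℂ) (N : ℕ) :
    (u - v) * (∑ k ∈ Finset.range (N + 1), S.p k u * S.q k v) - 1
      = (S.a N : ℂ) * (S.p (N + 1) u * S.q N v - S.p N u * S.q (N + 1) v) := by
  have hg := green S.a S.b (fun m => S.p m u) (fun m => S.q m v) N
  simp only [jacP, jacQ] at hg
  rw [← hg]
  have hsplit : ∀ k ∈ Finset.range (N + 1),
      (u * S.p k u) * S.q k v - S.p k u * (v * S.q k v + if k = 0 then (1:ℂ) else 0)
        = (u - v) * (S.p k u * S.q k v) - (if k = 0 then S.p k u else 0) := by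
    intro k _; split_ifs <;> ring
  rw [Finset.sum_congr rfl hsplit, Finset.sum_sub_distrib, ← Finset.mul_sum,
    Finset.sum_ite_eq' (Finset.range (N + 1)) 0 (fun k => S.p k u)]
  simp [S.hp0]

lemma jacobiMul_lin (a b : ℕ → ℝ) (x y z : ℕ → ℂ) (c d : ℂ) (n : ℕ) :
    jacobiMul a b (fun m => x m - c * y m - d * z m) n
      = jacobiMul a b x n - c * jacobiMul a b y n - d * jacobiMul a b z n := by
  match n with
  | 0 => show _ = _; simp only [jacobiMul]; ring
  | (m + 1) => show _ = _; simp only [jacobiMul]; ring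

lemma jacobiMul_lin2 (a b : ℕ → ℝ) (x y : ℕ → ℂ) (c : ℂ) (n : ℕ) :
    jacobiMul a b (fun m => x m + c * y m) n
      = jacobiMul a b x n + c * jacobiMul a b y n := by
  match n with
  | 0 => show _ = _; simp only [jacobiMul]; ring
  | (m + 1) => show _ = _; simp only [jacobiMul]; ring

/- ## Forward direction -/

lemma forward_main (S : JacobiSetup) (u v α : ℂ)
    (h : inDomT S.a S.b fun n => S.p n u + α * S.p n v) :
    nevD S u v = 0 ∧ α = nevB S u v := by
  obtain ⟨g, hg⟩ := h
  have hpu := summable_sq_p S u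
  have hpv := summable_sq_p S v
  have hqv := summable_sq_q S v
  have hgp : ∀ n, g n = u * S.p n u + α * (v * S.p n v) := by
    intro n
    rw [graph_pointwise hg n]
    rw [show jacobiMul S.a S.b (fun m => S.p m u + α * S.p m v) n
        = jacobiMul S.a S.b (fun m => S.p m u) n + α * jacobiMul S.a S.b (fun m => S.p m v) n
      from jacobiMul_lin2 S.a S.b _ _ α n, jacP, jacP]
  -- pairing with p_v
  have hd2 : Summable fun n => ‖jacobiMul S.a S.b (fun m => S.p m v) n‖ ^ 2 := by
    simp only [jacP]
    simpa [norm_mul, mul_pow] using hpv.mul_left (‖v‖ ^ 2)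
  have hpair1 := graph_pairing hg hpv hd2
  simp only [jacP] at hpair1
  have e1 : ∀ n, g n * S.p n v
      = u * (S.p n u * S.p n v) + (α * v) * (S.p n v * S.p n v) := fun n => by
    rw [hgp n]; ring
  have e1' : ∀ n, (S.p n u + α * S.p n v) * (v * S.p n v)
      = v * (S.p n u * S.p n v) + (α * v) * (S.p n v * S.p n v) := fun n => by ring
  rw [tsum_congr e1, tsum_congr e1',
    Summable.tsum_add ((summable_mul hpu hpv).mul_left u) ((summable_mul hpv hpv).mul_left (α * v)),
    Summable.tsum_add ((summable_mul hpu hpv).mul_left v) ((summable_mul hpv hpv).mul_left (α * v)),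
    tsum_mul_left, tsum_mul_left, tsum_mul_left] at hpair1
  constructor
  · show (u - v) * ∑' k, S.p k u * S.p k v = 0
    linear_combination hpair1
  -- pairing with q_v
  · have he0 : Summable fun n : ℕ => ‖if n = 0 then (1 : ℂ) else 0‖ ^ 2 :=
      summable_of_ne_finset_zero (s := {0}) (fun n hn => by
        simp only [Finset.mem_singleton] at hn; simp [hn])
    have hvq : Summable fun n => ‖v * S.q n v‖ ^ 2 := by
      simpa [norm_mul, mul_pow] using hqv.mul_left (‖v‖ ^ 2)
    have hd2' : Summable fun n => ‖jacobiMul S.a S.b (fun m => S.q m v) n‖ ^ 2 := by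
      simp only [jacQ]
      exact summable_sq_add hvq he0
    have hpair2 := graph_pairing hg hqv hd2'
    simp only [jacQ] at hpair2
    have e2 : ∀ n, g n * S.q n v
        = u * (S.p n u * S.q n v) + (α * v) * (S.p n v * S.q n v) := fun n => by
      rw [hgp n]; ring
    have e2' : ∀ n, (S.p n u + α * S.p n v) * (v * S.q n v + if n = 0 then (1:ℂ) else 0)
        = (v * (S.p n u * S.q n v) + (α * v) * (S.p n v * S.q n v))
          + (if n = 0 then S.p n u + α * S.p n v else 0) := fun n => by
      split_ifs <;> ring
    have hsum_ite : Summable fun n => if n = 0 then S.p n u + α * S.p n v else 0 :=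
      summable_of_ne_finset_zero (s := {0}) (fun n hn => by
        simp only [Finset.mem_singleton] at hn; simp [hn])
    have hite : ∑' n, (if n = 0 then S.p n u + α * S.p n v else 0) = 1 + α := by
      rw [tsum_eq_single 0 (fun n hn => by simp [hn])]
      simp [S.hp0]
    rw [tsum_congr e2, tsum_congr e2',
      Summable.tsum_add ((summable_mul hpu hqv).mul_left u) ((summable_mul hpv hqv).mul_left (α * v)),
      Summable.tsum_add (((summable_mul hpu hqv).mul_left v).add
        ((summable_mul hpv hqv).mul_left (α * v))) hsum_ite,
      Summable.tsum_add ((summable_mul hpu hqv).mul_left v) ((summable_mul hpv hqv).mul_left (α * v)),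
      tsum_mul_left, tsum_mul_left, tsum_mul_left, hite] at hpair2
    show α = -1 + (u - v) * ∑' k, S.p k u * S.q k v
    linear_combination -hpair2

/- ## Backward direction: corrected truncations -/

def bwF (S : JacobiSetup) (u v B : ℂ) (n : ℕ) : ℂ := S.p n u + B * S.p n v

def bwG (S : JacobiSetup) (u v B : ℂ) (n : ℕ) : ℂ :=
  u * S.p n u + B * (v * S.p n v)

def bwBeta (S : JacobiSetup) (u v B : ℂ) (N : ℕ) : ℂ :=
  (S.a N : ℂ) * (bwF S u v B N * S.q (N + 1) v - bwF S u v B (N + 1) * S.q N v)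

def bwGamma (S : JacobiSetup) (u v B : ℂ) (N : ℕ) : ℂ :=
  (S.a N : ℂ) * (bwF S u v B (N + 1) * S.p N v - bwF S u v B N * S.p (N + 1) v)

def bwW (S : JacobiSetup) (u v B : ℂ) (N n : ℕ) : ℂ :=
  bwF S u v B n - bwBeta S u v B N * S.p n v - bwGamma S u v B N * S.q n v

def bwU (S : JacobiSetup) (u v B : ℂ) (N n : ℕ) : ℂ :=
  if n ≤ N + 1 then bwW S u v B N n else 0

lemma bwW_N (S : JacobiSetup) (u v B : ℂ) (N : ℕ) : bwW S u v B N N = 0 := by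
  have h := wron S v N
  simp only [bwW, bwBeta, bwGamma]
  linear_combination (-(bwF S u v B N)) * h

lemma bwW_N1 (S : JacobiSetup) (u v B : ℂ) (N : ℕ) : bwW S u v B N (N + 1) = 0 := by
  have h := wron S v N
  simp only [bwW, bwBeta, bwGamma]
  linear_combination (-(bwF S u v B (N + 1))) * h

lemma bwJU (S : JacobiSetup) (u v B : ℂ) (N n : ℕ) :
    jacobiMul S.a S.b (bwU S u v B N) n
      = if n ≤ N then jacobiMul S.a S.b (bwW S u v B N) n else 0 := by
  match n with
  | 0 =>
      rw [if_pos (Nat.zero_le N)]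
      show (S.b 0 : ℂ) * bwU S u v B N 0 + (S.a 0 : ℂ) * bwU S u v B N 1
        = (S.b 0 : ℂ) * bwW S u v B N 0 + (S.a 0 : ℂ) * bwW S u v B N 1
      simp only [bwU]
      rw [if_pos (by omega), if_pos (by omega)]
  | (m + 1) =>
      show (S.a m : ℂ) * bwU S u v B N m + (S.b (m + 1) : ℂ) * bwU S u v B N (m + 1)
        + (S.a (m + 1) : ℂ) * bwU S u v B N (m + 2) = _
      by_cases h1 : m + 1 ≤ N
      · rw [if_pos h1]
        show _ = (S.a m : ℂ) * bwW S u v B N m + (S.b (m + 1) : ℂ) * bwW S u v B N (m + 1)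
          + (S.a (m + 1) : ℂ) * bwW S u v B N (m + 2)
        simp only [bwU]
        rw [if_pos (by omega), if_pos (by omega), if_pos (by omega)]
      · rw [if_neg h1]
        by_cases h2 : m = N
        · subst h2
          simp only [bwU]
          rw [if_pos (by omega), if_pos (by omega), if_neg (by omega), bwW_N, bwW_N1]
          ring
        · by_cases h3 : m = N + 1
          · subst h3
            simp only [bwU]
            rw [if_pos (by omega), if_neg (by omega), if_neg (by omega), bwW_N1]
            ring
          · simp only [bwU]
            rw [if_neg (by omega), if_neg (by omega), if_neg (by omega)]
            ring

lemma bwJW (S : JacobiSetup) (u v B : ℂ) (N n : ℕ) :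
    jacobiMul S.a S.b (bwW S u v B N) n
      = bwG S u v B n - bwBeta S u v B N * (v * S.p n v)
        - bwGamma S u v B N * (v * S.q n v + if n = 0 then 1 else 0) := by
  have h := jacobiMul_lin S.a S.b (bwF S u v B) (fun m => S.p m v) (fun m => S.q m v)
    (bwBeta S u v B N) (bwGamma S u v B N) n
  rw [show jacobiMul S.a S.b (bwW S u v B N) n
      = jacobiMul S.a S.b (fun m => bwF S u v B m - bwBeta S u v B N * S.p m v
        - bwGamma S u v B N * S.q m v) n from rfl, h, jacP, jacQ]
  rw [show jacobiMul S.a S.b (bwF S u v B) n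
      = jacobiMul S.a S.b (fun m => S.p m u + B * S.p m v) n from rfl,
    jacobiMul_lin2 S.a S.b (fun m => S.p m u) (fun m => S.p m v) _ n, jacP, jacP]
  simp only [bwG]

lemma bwBeta_eq (S : JacobiSetup) (u v B : ℂ) (N : ℕ) :
    bwBeta S u v B N
      = (1 + B) - (u - v) * ∑ k ∈ Finset.range (N + 1), S.p k u * S.q k v := by
  have h1 := cdPQ S u v N
  have h2 := cdPQ S v v N
  simp only [bwBeta, bwF]
  linear_combination h1 + B * h2

lemma bwGamma_eq (S : JacobiSetup) (u v B : ℂ) (N : ℕ) :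
    bwGamma S u v B N = (u - v) * ∑ k ∈ Finset.range (N + 1), S.p k u * S.p k v := by
  have h1 := cdPP S u v N
  have h2 := cdPP S v v N
  simp only [bwGamma, bwF]
  linear_combination -h1 - B * h2

lemma bwBeta_tendsto (S : JacobiSetup) (u v : ℂ) :
    Tendsto (bwBeta S u v (nevB S u v)) atTop (𝓝 0) := by
  have hs : Summable fun k => S.p k u * S.q k v :=
    summable_mul (summable_sq_p S u) (summable_sq_q S v)
  have hps : Tendsto (fun N => ∑ k ∈ Finset.range (N + 1), S.p k u * S.q k v) atTop
      (𝓝 (∑' k, S.p k u * S.q k v)) :=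
    hs.hasSum.tendsto_sum_nat.comp (tendsto_add_atTop_nat 1)
  have ht : Tendsto (fun N => (1 + nevB S u v)
      - (u - v) * ∑ k ∈ Finset.range (N + 1), S.p k u * S.q k v) atTop
      (𝓝 ((1 + nevB S u v) - (u - v) * ∑' k, S.p k u * S.q k v)) :=
    tendsto_const_nhds.sub (hps.const_mul _)
  have hval : (1 + nevB S u v) - (u - v) * ∑' k, S.p k u * S.q k v = 0 := by
    simp only [nevB]; ring
  have hfun : bwBeta S u v (nevB S u v) = fun N => (1 + nevB S u v)
      - (u - v) * ∑ k ∈ Finset.range (N + 1), S.p k u * S.q k v :=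
    funext (bwBeta_eq S u v (nevB S u v))
  rw [hfun, ← hval]
  exact ht

lemma bwGamma_tendsto (S : JacobiSetup) (u v : ℂ) (hD : nevD S u v = 0) :
    Tendsto (bwGamma S u v (nevB S u v)) atTop (𝓝 0) := by
  have hs : Summable fun k => S.p k u * S.p k v :=
    summable_mul (summable_sq_p S u) (summable_sq_p S v)
  have hps : Tendsto (fun N => ∑ k ∈ Finset.range (N + 1), S.p k u * S.p k v) atTop
      (𝓝 (∑' k, S.p k u * S.p k v)) :=
    hs.hasSum.tendsto_sum_nat.comp (tendsto_add_atTop_nat 1)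
  have ht : Tendsto (fun N => (u - v) * ∑ k ∈ Finset.range (N + 1), S.p k u * S.p k v) atTop
      (𝓝 ((u - v) * ∑' k, S.p k u * S.p k v)) := hps.const_mul _
  have hval : (u - v) * ∑' k, S.p k u * S.p k v = 0 := hD
  have hfun : bwGamma S u v (nevB S u v) = fun N =>
      (u - v) * ∑ k ∈ Finset.range (N + 1), S.p k u * S.p k v :=
    funext (bwGamma_eq S u v (nevB S u v))
  rw [hfun, ← hval]
  exact ht

/- ## A convergence workhorse -/

lemma cut_sq_summable {x : ℕ → ℂ} (hx : Summable fun n => ‖x n‖ ^ 2) (P : ℕ → Prop)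
    [DecidablePred P] : Summable fun n => ‖if P n then x n else 0‖ ^ 2 :=
  hx.of_nonneg_of_le (fun n => sq_nonneg _)
    (fun n => by split_ifs <;> simp [sq_nonneg])

lemma cut_sq_le {x : ℕ → ℂ} (hx : Summable fun n => ‖x n‖ ^ 2) (P : ℕ → Prop)
    [DecidablePred P] : ∑' n, ‖if P n then x n else 0‖ ^ 2 ≤ ∑' n, ‖x n‖ ^ 2 :=
  Summable.tsum_le_tsum (fun n => by split_ifs <;> simp [sq_nonneg]) (cut_sq_summable hx P) hx

lemma tend0 {c1 c2 : ℕ → ℂ} {x y h : ℕ → ℕ → ℂ} {Cx Cy : ℝ}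
    (hx : ∀ N, Summable fun n => ‖x N n‖ ^ 2) (hxb : ∀ N, ∑' n, ‖x N n‖ ^ 2 ≤ Cx)
    (hy : ∀ N, Summable fun n => ‖y N n‖ ^ 2) (hyb : ∀ N, ∑' n, ‖y N n‖ ^ 2 ≤ Cy)
    (hh : ∀ N, Summable fun n => ‖h N n‖ ^ 2)
    (hc1 : Tendsto c1 atTop (𝓝 0)) (hc2 : Tendsto c2 atTop (𝓝 0))
    (hht : Tendsto (fun N => ∑' n, ‖h N n‖ ^ 2) atTop (𝓝 0)) :
    (∀ N, Summable fun n => ‖c1 N * x N n + c2 N * y N n + h N n‖ ^ 2) ∧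
      Tendsto (fun N => ∑' n, ‖c1 N * x N n + c2 N * y N n + h N n‖ ^ 2) atTop (𝓝 0) := by
  have hcx : ∀ N, Summable fun n => ‖c1 N * x N n‖ ^ 2 := fun N => by
    simpa [norm_mul, mul_pow] using (hx N).mul_left (‖c1 N‖ ^ 2)
  have hcy : ∀ N, Summable fun n => ‖c2 N * y N n‖ ^ 2 := fun N => by
    simpa [norm_mul, mul_pow] using (hy N).mul_left (‖c2 N‖ ^ 2)
  have hsum : ∀ N, Summable fun n => ‖c1 N * x N n + c2 N * y N n + h N n‖ ^ 2 := fun N =>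
    summable_sq_add (summable_sq_add (hcx N) (hcy N)) (hh N)
  refine ⟨hsum, ?_⟩
  set E : ℕ → ℝ := fun N => ‖c1 N‖ * Real.sqrt Cx + ‖c2 N‖ * Real.sqrt Cy
      + Real.sqrt (∑' n, ‖h N n‖ ^ 2) with hE
  have hEbound : ∀ N, ∑' n, ‖c1 N * x N n + c2 N * y N n + h N n‖ ^ 2 ≤ E N ^ 2 := by
    intro N
    have m1 := l2_mink (summable_sq_add (hcx N) (hcy N)) (hh N)
    have m2 := l2_mink (hcx N) (hcy N)
    have m3 : Real.sqrt (∑' n, ‖c1 N * x N n‖ ^ 2) ≤ ‖c1 N‖ * Real.sqrt Cx := by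
      have e : ∑' n, ‖c1 N * x N n‖ ^ 2 = ‖c1 N‖ ^ 2 * ∑' n, ‖x N n‖ ^ 2 := by
        rw [← tsum_mul_left]; exact tsum_congr fun n => by rw [norm_mul]; ring
      rw [e, Real.sqrt_mul (sq_nonneg _), Real.sqrt_sq (norm_nonneg _)]
      exact mul_le_mul_of_nonneg_left (Real.sqrt_le_sqrt (hxb N)) (norm_nonneg _)
    have m4 : Real.sqrt (∑' n, ‖c2 N * y N n‖ ^ 2) ≤ ‖c2 N‖ * Real.sqrt Cy := by
      have e : ∑' n, ‖c2 N * y N n‖ ^ 2 = ‖c2 N‖ ^ 2 * ∑' n, ‖y N n‖ ^ 2 := by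
        rw [← tsum_mul_left]; exact tsum_congr fun n => by rw [norm_mul]; ring
      rw [e, Real.sqrt_mul (sq_nonneg _), Real.sqrt_sq (norm_nonneg _)]
      exact mul_le_mul_of_nonneg_left (Real.sqrt_le_sqrt (hyb N)) (norm_nonneg _)
    have hS0 : 0 ≤ ∑' n, ‖c1 N * x N n + c2 N * y N n + h N n‖ ^ 2 :=
      tsum_nonneg fun n => sq_nonneg _
    have hfin : Real.sqrt (∑' n, ‖c1 N * x N n + c2 N * y N n + h N n‖ ^ 2) ≤ E N := by
      rw [hE]; dsimp only
      linarith
    calc ∑' n, ‖c1 N * x N n + c2 N * y N n + h N n‖ ^ 2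
        = Real.sqrt (∑' n, ‖c1 N * x N n + c2 N * y N n + h N n‖ ^ 2) ^ 2 :=
          (Real.sq_sqrt hS0).symm
      _ ≤ E N ^ 2 := pow_le_pow_left₀ (Real.sqrt_nonneg _) hfin 2
  have hE0 : Tendsto E atTop (𝓝 0) := by
    have t1 : Tendsto (fun N => ‖c1 N‖) atTop (𝓝 0) := by
      simpa using hc1.norm
    have t2 : Tendsto (fun N => ‖c2 N‖) atTop (𝓝 0) := by
      simpa using hc2.norm
    have t3 : Tendsto (fun N => Real.sqrt (∑' n, ‖h N n‖ ^ 2)) atTop (𝓝 0) := by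
      have := (Real.continuous_sqrt.tendsto 0).comp hht
      simpa [Function.comp_def] using this
    have := ((t1.mul_const (Real.sqrt Cx)).add (t2.mul_const (Real.sqrt Cy))).add t3
    simpa using this
  refine squeeze_zero (fun N => tsum_nonneg fun n => sq_nonneg _) hEbound ?_
  have := hE0.mul hE0
  simpa [pow_two] using this

set_option maxHeartbeats 1600000 in
lemma backward_gen (S : JacobiSetup) (u v B : ℂ)
    (hbt : Tendsto (bwBeta S u v B) atTop (𝓝 0))
    (hgt : Tendsto (bwGamma S u v B) atTop (𝓝 0)) :
    inDomT S.a S.b fun n => S.p n u + B * S.p n v := by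
  have hpu := summable_sq_p S u
  have hpv := summable_sq_p S v
  have hqv := summable_sq_q S v
  have hBpv : Summable fun n => ‖B * S.p n v‖ ^ 2 := by
    simpa [norm_mul, mul_pow] using hpv.mul_left (‖B‖ ^ 2)
  have hf2 : Summable fun n => ‖S.p n u + B * S.p n v‖ ^ 2 :=
    summable_sq_add hpu hBpv
  have hupu : Summable fun n => ‖u * S.p n u‖ ^ 2 := by
    simpa [norm_mul, mul_pow] using hpu.mul_left (‖u‖ ^ 2)
  have hvpv : Summable fun n => ‖v * S.p n v‖ ^ 2 := by
    simpa [norm_mul, mul_pow] using hpv.mul_left (‖v‖ ^ 2)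
  have hBvpv : Summable fun n => ‖B * (v * S.p n v)‖ ^ 2 := by
    have := hpv.mul_left (‖B‖ ^ 2 * ‖v‖ ^ 2)
    refine this.congr (fun n => ?_)
    simp [norm_mul, mul_pow]
    ring
  have hg2 : Summable fun n => ‖bwG S u v B n‖ ^ 2 := by
    simp only [bwG]
    exact summable_sq_add hupu hBvpv
  have hvq : Summable fun n => ‖v * S.q n v‖ ^ 2 := by
    simpa [norm_mul, mul_pow] using hqv.mul_left (‖v‖ ^ 2)
  have he0 : Summable fun n : ℕ => ‖if n = 0 then (1 : ℂ) else 0‖ ^ 2 :=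
    summable_of_ne_finset_zero (s := {0}) (fun n hn => by
      simp only [Finset.mem_singleton] at hn; simp [hn])
  have hy2 : Summable fun n => ‖v * S.q n v + if n = 0 then (1 : ℂ) else 0‖ ^ 2 :=
    summable_sq_add hvq he0
  have hc1 : Tendsto (fun N => -bwBeta S u v B N) atTop (𝓝 0) := by
    simpa using hbt.neg
  have hc2 : Tendsto (fun N => -bwGamma S u v B N) atTop (𝓝 0) := by
    simpa using hgt.neg
  -- first approximation package (for f)
  have hhid1 : ∀ N n, ‖if n ≤ N + 1 then (0 : ℂ)
      else -(S.p n u + B * S.p n v)‖ ^ 2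
      = if N + 1 < n then ‖S.p n u + B * S.p n v‖ ^ 2 else 0 := by
    intro N n
    by_cases h : n ≤ N + 1
    · rw [if_pos h, if_neg (by omega)]; simp
    · rw [if_neg h, if_pos (by omega), norm_neg]
  have hhs1 : ∀ N, Summable fun n => ‖if n ≤ N + 1 then (0 : ℂ)
      else -(S.p n u + B * S.p n v)‖ ^ 2 := by
    intro N
    refine Summable.congr ?_ (fun n => (hhid1 N n).symm)
    exact hf2.of_nonneg_of_le (fun n => by positivity)
      (fun n => by split_ifs <;> simp [sq_nonneg])
  have hht1 : Tendsto (fun N => ∑' n, ‖if n ≤ N + 1 then (0 : ℂ)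
      else -(S.p n u + B * S.p n v)‖ ^ 2) atTop (𝓝 0) := by
    simp only [hhid1]
    exact (tail_tendsto hf2 (fun n => sq_nonneg _)).comp (tendsto_add_atTop_nat 1)
  have key1 := tend0 (x := fun N n => if n ≤ N + 1 then S.p n v else 0)
    (y := fun N n => if n ≤ N + 1 then S.q n v else 0)
    (fun N => cut_sq_summable hpv _) (fun N => cut_sq_le hpv _)
    (fun N => cut_sq_summable hqv _) (fun N => cut_sq_le hqv _)
    hhs1 hc1 hc2 hht1
  have hid1 : ∀ N n, bwU S u v B N n - (S.p n u + B * S.p n v)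
      = (-bwBeta S u v B N) * (if n ≤ N + 1 then S.p n v else 0)
        + (-bwGamma S u v B N) * (if n ≤ N + 1 then S.q n v else 0)
        + (if n ≤ N + 1 then (0 : ℂ) else -(S.p n u + B * S.p n v)) := by
    intro N n
    simp only [bwU, bwW, bwF]
    split_ifs with h <;> ring
  -- second approximation package (for g)
  have hhid2 : ∀ N n, ‖if n ≤ N then (0 : ℂ) else -(bwG S u v B n)‖ ^ 2
      = if N < n then ‖bwG S u v B n‖ ^ 2 else 0 := by
    intro N n
    by_cases h : n ≤ N
    · rw [if_pos h, if_neg (by omega)]; simp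
    · rw [if_neg h, if_pos (by omega), norm_neg]
  have hhs2 : ∀ N, Summable fun n => ‖if n ≤ N then (0 : ℂ) else -(bwG S u v B n)‖ ^ 2 := by
    intro N
    refine Summable.congr ?_ (fun n => (hhid2 N n).symm)
    exact hg2.of_nonneg_of_le (fun n => by positivity)
      (fun n => by split_ifs <;> simp [sq_nonneg])
  have hht2 : Tendsto (fun N => ∑' n, ‖if n ≤ N then (0 : ℂ)
      else -(bwG S u v B n)‖ ^ 2) atTop (𝓝 0) := by
    simp only [hhid2]
    exact tail_tendsto hg2 (fun n => sq_nonneg _)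
  have key2 := tend0 (x := fun N n => if n ≤ N then v * S.p n v else 0)
    (y := fun N n => if n ≤ N then (v * S.q n v + if n = 0 then (1 : ℂ) else 0) else 0)
    (fun N => cut_sq_summable hvpv _) (fun N => cut_sq_le hvpv _)
    (fun N => cut_sq_summable hy2 _) (fun N => cut_sq_le hy2 _)
    hhs2 hc1 hc2 hht2
  have hid2 : ∀ N n, jacobiMul S.a S.b (bwU S u v B N) n - bwG S u v B n
      = (-bwBeta S u v B N) * (if n ≤ N then v * S.p n v else 0)
        + (-bwGamma S u v B N) * (if n ≤ N then (v * S.q n v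
            + if n = 0 then (1 : ℂ) else 0) else 0)
        + (if n ≤ N then (0 : ℂ) else -(bwG S u v B n)) := by
    intro N n
    rw [bwJU]
    by_cases h : n ≤ N
    · rw [if_pos h, if_pos h, if_pos h, if_pos h, bwJW]
      ring
    · rw [if_neg h, if_neg h, if_neg h, if_neg h]
      ring
  refine ⟨bwG S u v B, bwU S u v B, ?_, ?_, ?_, ?_, ?_⟩
  · intro N
    refine Set.Finite.subset (Set.finite_Iic (N + 1)) (fun n hn => ?_)
    simp only [Function.mem_support] at hn
    by_contra hc
    simp only [Set.mem_Iic, not_le] at hc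
    exact hn (by simp only [bwU]; exact if_neg (by omega))
  · intro k
    show Summable fun n => ‖bwU S u v B k n - (S.p n u + B * S.p n v)‖ ^ 2
    exact (key1.1 k).congr
      (fun n => (congrArg (fun t : ℂ => ‖t‖ ^ 2) (hid1 k n)).symm)
  · show Tendsto (fun k => ∑' n,
      ‖bwU S u v B k n - (S.p n u + B * S.p n v)‖ ^ 2) atTop (𝓝 0)
    refine key1.2.congr (fun k => ?_)
    exact (tsum_congr (fun n => congrArg (fun t : ℂ => ‖t‖ ^ 2) (hid1 k n))).symm
  · intro k
    show Summable fun n => ‖jacobiMul S.a S.b (bwU S u v B k) n - bwG S u v B n‖ ^ 2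
    exact (key2.1 k).congr
      (fun n => (congrArg (fun t : ℂ => ‖t‖ ^ 2) (hid2 k n)).symm)
  · show Tendsto (fun k => ∑' n,
      ‖jacobiMul S.a S.b (bwU S u v B k) n - bwG S u v B n‖ ^ 2) atTop (𝓝 0)
    refine key2.2.congr (fun k => ?_)
    exact (tsum_congr (fun n => congrArg (fun t : ℂ => ‖t‖ ^ 2) (hid2 k n))).symm

set_option maxHeartbeats 800000 in
/-- There exists `α` with `𝔭_u + α 𝔭_v ∈ D(T)` iff `D(u,v) = 0`, and in the affirmative
case `α` is unique and equals `B(u,v)`. -/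
theorem stmt1 (S : JacobiSetup) (u v : ℂ) :
    ((∃ α : ℂ, inDomT S.a S.b fun n => S.p n u + α * S.p n v) ↔ nevD S u v = 0) ∧
    ∀ α : ℂ, (inDomT S.a S.b fun n => S.p n u + α * S.p n v) → α = nevB S u v := by
  refine ⟨⟨?_, ?_⟩, ?_⟩
  · rintro ⟨α, hα⟩
    exact (forward_main S u v α hα).1
  · intro hD
    exact ⟨nevB S u v, backward_gen S u v (nevB S u v)
      (bwBeta_tendsto S u v) (bwGamma_tendsto S u v hD)⟩
  · intro α hα
    exact (forward_main S u v α hα).2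
end
end

section
/- Let v ∈ ℝ and let u ∈ ℝ satisfy D(u,v) = 0, u < v, and D(x,v) ≠ 0 for all x in the open interval (u,v). Then B(u,v) is a positive real number. -/
open Filter Topology MeasureTheory

noncomputable section

namespace JacobiSetup
variable (S : JacobiSetup)

lemma haC (n : ℕ) : (S.a n : ℂ) ≠ 0 := by
  exact_mod_cast (S.ha n).ne'

lemma haR (n : ℕ) : S.a n ≠ 0 := (S.ha n).ne'

/-- p solved for the top index. -/
lemma psolve (n : ℕ) (z : ℂ) :
    S.p (n + 2) z = ((z - (S.b (n+1) : ℂ)) * S.p (n+1) z - (S.a n : ℂ) * S.p n z) / (S.a (n+1) : ℂ) := by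
  have h := S.hrecp n z
  field_simp [S.haC (n+1)]
  linear_combination -h

end JacobiSetup

namespace JacobiSetup
variable (S : JacobiSetup)

lemma qsolve (n : ℕ) (z : ℂ) :
    S.q (n + 2) z = ((z - (S.b (n+1) : ℂ)) * S.q (n+1) z - (S.a n : ℂ) * S.q n z) / (S.a (n+1) : ℂ) := by
  have h := S.hrecq n z
  field_simp [S.haC (n+1)]
  linear_combination -h

/-- Real versions of the orthonormal polynomials. -/
def P (n : ℕ) (x : ℝ) : ℝ := (S.p n (x : ℂ)).re
def Q (n : ℕ) (x : ℝ) : ℝ := (S.q n (x : ℂ)).re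

lemma real_pq (n : ℕ) (x : ℝ) :
    S.p n (x : ℂ) = (S.P n x : ℂ) ∧ S.q n (x : ℂ) = (S.Q n x : ℂ) := by
  induction n using Nat.twoStepInduction with
  | zero =>
    constructor
    · rw [P, S.hp0]; simp
    · rw [Q, S.hq0]; simp
  | one =>
    constructor
    · rw [P, S.hp1]
      have : ((x : ℂ) - (S.b 0 : ℂ)) / (S.a 0 : ℂ) = (((x - S.b 0) / S.a 0 : ℝ) : ℂ) := by
        push_cast; ring
      rw [this]; simp
    · rw [Q, S.hq1]
      have : (1 : ℂ) / (S.a 0 : ℂ) = (((1 : ℝ) / S.a 0 : ℝ) : ℂ) := by push_cast; ring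
      rw [this]; simp
  | more n ih1 ih2 =>
    constructor
    · rw [P, S.psolve, ih2.1, ih1.1]
      have : ((x : ℂ) - (S.b (n+1) : ℂ)) * ((S.P (n+1) x : ℝ) : ℂ) - (S.a n : ℂ) * ((S.P n x : ℝ) : ℂ) =
          (((x - S.b (n+1)) * S.P (n+1) x - S.a n * S.P n x : ℝ) : ℂ) := by push_cast; ring
      rw [this]
      rw [show ((((x - S.b (n+1)) * S.P (n+1) x - S.a n * S.P n x : ℝ) : ℂ)) / (S.a (n+1) : ℂ) =
        ((((x - S.b (n+1)) * S.P (n+1) x - S.a n * S.P n x) / S.a (n+1) : ℝ) : ℂ) by push_cast; ring]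
      simp
    · rw [Q, S.qsolve, ih2.2, ih1.2]
      have : ((x : ℂ) - (S.b (n+1) : ℂ)) * ((S.Q (n+1) x : ℝ) : ℂ) - (S.a n : ℂ) * ((S.Q n x : ℝ) : ℂ) =
          (((x - S.b (n+1)) * S.Q (n+1) x - S.a n * S.Q n x : ℝ) : ℂ) := by push_cast; ring
      rw [this]
      rw [show ((((x - S.b (n+1)) * S.Q (n+1) x - S.a n * S.Q n x : ℝ) : ℂ)) / (S.a (n+1) : ℂ) =
        ((((x - S.b (n+1)) * S.Q (n+1) x - S.a n * S.Q n x) / S.a (n+1) : ℝ) : ℂ) by push_cast; ring]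
      simp

lemma pP (n : ℕ) (x : ℝ) : S.p n (x : ℂ) = (S.P n x : ℂ) := (S.real_pq n x).1
lemma qQ (n : ℕ) (x : ℝ) : S.q n (x : ℂ) = (S.Q n x : ℂ) := (S.real_pq n x).2

lemma P0 (x : ℝ) : S.P 0 x = 1 := by
  have := S.pP 0 x; rw [S.hp0] at this
  exact_mod_cast this.symm

lemma Q0 (x : ℝ) : S.Q 0 x = 0 := by
  have := S.qQ 0 x; rw [S.hq0] at this
  exact_mod_cast this.symm

lemma P1 (x : ℝ) : S.P 1 x = (x - S.b 0) / S.a 0 := by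
  have := S.pP 1 x; rw [S.hp1] at this
  have h2 : (((x - S.b 0)/ S.a 0 : ℝ) : ℂ) = ((x:ℂ) - (S.b 0 : ℂ))/(S.a 0 : ℂ) := by push_cast; ring
  rw [← h2] at this
  exact_mod_cast this.symm

lemma Q1 (x : ℝ) : S.Q 1 x = 1 / S.a 0 := by
  have := S.qQ 1 x; rw [S.hq1] at this
  have h2 : ((1 / S.a 0 : ℝ) : ℂ) = 1/(S.a 0 : ℂ) := by push_cast; ring
  rw [← h2] at this
  exact_mod_cast this.symm

lemma Psolve (n : ℕ) (x : ℝ) :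
    S.P (n + 2) x = ((x - S.b (n+1)) * S.P (n+1) x - S.a n * S.P n x) / S.a (n+1) := by
  have := S.psolve n (x : ℂ)
  rw [S.pP, S.pP, S.pP] at this
  have h2 : ((((x - S.b (n+1)) * S.P (n+1) x - S.a n * S.P n x) / S.a (n+1) : ℝ) : ℂ) =
      ( ((x:ℂ) - (S.b (n+1):ℂ)) * (S.P (n+1) x : ℂ) - (S.a n : ℂ) * (S.P n x:ℂ)) / (S.a (n+1) : ℂ) := by
    push_cast; ring
  rw [← h2] at this
  exact_mod_cast this

lemma Qsolve (n : ℕ) (x : ℝ) :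
    S.Q (n + 2) x = ((x - S.b (n+1)) * S.Q (n+1) x - S.a n * S.Q n x) / S.a (n+1) := by
  have := S.qsolve n (x : ℂ)
  rw [S.qQ, S.qQ, S.qQ] at this
  have h2 : ((((x - S.b (n+1)) * S.Q (n+1) x - S.a n * S.Q n x) / S.a (n+1) : ℝ) : ℂ) =
      ( ((x:ℂ) - (S.b (n+1):ℂ)) * (S.Q (n+1) x : ℂ) - (S.a n : ℂ) * (S.Q n x:ℂ)) / (S.a (n+1) : ℂ) := by
    push_cast; ring
  rw [← h2] at this
  exact_mod_cast this

/-- The real three-term recurrence for `P`. -/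
lemma Prec (n : ℕ) (x : ℝ) :
    x * S.P (n+1) x = S.a (n+1) * S.P (n+2) x + S.b (n+1) * S.P (n+1) x + S.a n * S.P n x := by
  rw [S.Psolve]; field_simp [S.haR (n+1)]; ring

lemma Qrec (n : ℕ) (x : ℝ) :
    x * S.Q (n+1) x = S.a (n+1) * S.Q (n+2) x + S.b (n+1) * S.Q (n+1) x + S.a n * S.Q n x := by
  rw [S.Qsolve]; field_simp [S.haR (n+1)]; ring

lemma contP (n : ℕ) : Continuous (S.P n) := by
  induction n using Nat.twoStepInduction with
  | zero => simpa [funext (S.P0)] using continuous_const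
  | one =>
    have : S.P 1 = fun x => (x - S.b 0) / S.a 0 := funext (S.P1)
    rw [this]; fun_prop
  | more n ih1 ih2 =>
    have : S.P (n+2) = fun x => ((x - S.b (n+1)) * S.P (n+1) x - S.a n * S.P n x) / S.a (n+1) :=
      funext (S.Psolve n)
    rw [this]; fun_prop

end JacobiSetup

namespace JacobiSetup
variable (S : JacobiSetup)

/-- Summability of squares (real form). -/
lemma sumsq (x : ℝ) : Summable fun k => S.P k x ^ 2 + S.Q k x ^ 2 := by
  have h := S.indet (x : ℂ)
  convert h using 2 with k
  rw [S.pP, S.qQ]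
  simp [Complex.norm_real, sq_abs]

lemma sumsqP (x : ℝ) : Summable fun k => S.P k x ^ 2 :=
  (S.sumsq x).of_nonneg_of_le (fun k => sq_nonneg _) (fun k => by nlinarith [sq_nonneg (S.Q k x)])

lemma sumsqQ (x : ℝ) : Summable fun k => S.Q k x ^ 2 :=
  (S.sumsq x).of_nonneg_of_le (fun k => sq_nonneg _) (fun k => by nlinarith [sq_nonneg (S.P k x)])

/-- Summability of products of square-summable sequences. -/
lemma summul {f g : ℕ → ℝ} (hf : Summable fun k => f k ^ 2) (hg : Summable fun k => g k ^ 2) :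
    Summable fun k => f k * g k := by
  have : Summable fun k => |f k * g k| := by
    apply Summable.of_nonneg_of_le (fun k => abs_nonneg _)
      (fun k => ?_) (by simpa using (hf.add hg).mul_left (1/2 : ℝ))
    have := abs_mul (f k) (g k)
    nlinarith [sq_nonneg (|f k| - |g k|), sq_abs (f k), sq_abs (g k), abs_nonneg (f k), abs_nonneg (g k)]
  exact this.of_abs

lemma sumPP (x y : ℝ) : Summable fun k => S.P k x * S.P k y := summul (S.sumsqP x) (S.sumsqP y)
lemma sumPQ (x y : ℝ) : Summable fun k => S.P k x * S.Q k y := summul (S.sumsqP x) (S.sumsqQ y)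

/-- Christoffel–Darboux for `P`, `P`. -/
lemma cdPP (x y : ℝ) (n : ℕ) :
    (x - y) * ∑ k ∈ Finset.range (n+1), S.P k x * S.P k y =
      S.a n * (S.P (n+1) x * S.P n y - S.P n x * S.P (n+1) y) := by
  induction n with
  | zero =>
    norm_num [Finset.sum_range_one, S.P0, S.P1]
    field_simp [S.haR 0]
    ring
  | succ n ih =>
    rw [Finset.sum_range_succ, mul_add, ih]
    have hx := S.Prec n x
    have hy := S.Prec n y
    linear_combination S.P (n+1) y * hx - S.P (n+1) x * hy

/-- Christoffel–Darboux for `P`, `Q`. -/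
lemma cdPQ (x y : ℝ) (n : ℕ) :
    (x - y) * ∑ k ∈ Finset.range (n+1), S.P k x * S.Q k y =
      S.a n * (S.P (n+1) x * S.Q n y - S.P n x * S.Q (n+1) y) + 1 := by
  induction n with
  | zero =>
    norm_num [Finset.sum_range_one, S.P0, S.P1, S.Q0, S.Q1]
    field_simp [S.haR 0]
    ring
  | succ n ih =>
    rw [Finset.sum_range_succ, mul_add, ih]
    have hx := S.Prec n x
    have hy := S.Qrec n y
    linear_combination S.Q (n+1) y * hx - S.P (n+1) x * hy

/-- The Wronskian is constant `-1`. -/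
lemma wronsk (x : ℝ) (n : ℕ) :
    S.a n * (S.P (n+1) x * S.Q n x - S.P n x * S.Q (n+1) x) = -1 := by
  induction n with
  | zero =>
    norm_num [S.P0, S.P1, S.Q0, S.Q1]
    field_simp [S.haR 0]
  | succ n ih =>
    have hx := S.Prec n x
    have hy := S.Qrec n x
    linear_combination ih - S.Q (n+1) x * hx + S.P (n+1) x * hy

end JacobiSetup

namespace JacobiSetup
variable (S : JacobiSetup)

/-- Real version of `nevD`. -/
def DD (x y : ℝ) : ℝ := (x - y) * ∑' k, S.P k x * S.P k y
/-- Real version of `nevB`. -/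
def BB (x y : ℝ) : ℝ := -1 + (x - y) * ∑' k, S.P k x * S.Q k y

lemma tendsto_wpp (x y : ℝ) :
    Tendsto (fun n => S.a n * (S.P (n+1) x * S.P n y - S.P n x * S.P (n+1) y))
      atTop (𝓝 (S.DD x y)) := by
  have h1 : (fun n => S.a n * (S.P (n+1) x * S.P n y - S.P n x * S.P (n+1) y)) =
      fun n => (x - y) * ∑ k ∈ Finset.range (n+1), S.P k x * S.P k y := by
    funext n; rw [S.cdPP]
  rw [h1]
  apply Tendsto.const_mul
  exact ((S.sumPP x y).hasSum.tendsto_sum_nat).comp (tendsto_add_atTop_nat 1)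

lemma tendsto_wpq (x y : ℝ) :
    Tendsto (fun n => S.a n * (S.P (n+1) x * S.Q n y - S.P n x * S.Q (n+1) y))
      atTop (𝓝 (S.BB x y)) := by
  have h1 : (fun n => S.a n * (S.P (n+1) x * S.Q n y - S.P n x * S.Q (n+1) y)) =
      fun n => (x - y) * (∑ k ∈ Finset.range (n+1), S.P k x * S.Q k y) - 1 := by
    funext n
    have := S.cdPQ x y n
    linarith
  rw [h1, BB]
  have h2 : Tendsto (fun n => (x - y) * ∑ k ∈ Finset.range (n+1), S.P k x * S.Q k y)
      atTop (𝓝 ((x - y) * ∑' k, S.P k x * S.Q k y)) := by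
    apply Tendsto.const_mul
    exact ((S.sumPQ x y).hasSum.tendsto_sum_nat).comp (tendsto_add_atTop_nat 1)
  have := h2.sub_const 1
  convert this using 2
  ring

/-- The key bilinear identity `B(x,v)D(y,v) - B(y,v)D(x,v) = D(x,y)`. -/
lemma keyid (x y v : ℝ) :
    S.BB x v * S.DD y v - S.BB y v * S.DD x v = S.DD x y := by
  have hn : ∀ n, (S.a n * (S.P (n+1) x * S.Q n v - S.P n x * S.Q (n+1) v)) *
        (S.a n * (S.P (n+1) y * S.P n v - S.P n y * S.P (n+1) v)) -
      (S.a n * (S.P (n+1) y * S.Q n v - S.P n y * S.Q (n+1) v)) *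
        (S.a n * (S.P (n+1) x * S.P n v - S.P n x * S.P (n+1) v)) =
      (S.a n * (S.P (n+1) x * S.P n y - S.P n x * S.P (n+1) y)) * 1 := by
    intro n
    have hw := S.wronsk v n
    linear_combination -(S.a n * (S.P (n+1) x * S.P n y - S.P n x * S.P (n+1) y)) * hw
  have hL : Tendsto (fun n => (S.a n * (S.P (n+1) x * S.Q n v - S.P n x * S.Q (n+1) v)) *
        (S.a n * (S.P (n+1) y * S.P n v - S.P n y * S.P (n+1) v)) -
      (S.a n * (S.P (n+1) y * S.Q n v - S.P n y * S.Q (n+1) v)) *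
        (S.a n * (S.P (n+1) x * S.P n v - S.P n x * S.P (n+1) v)))
      atTop (𝓝 (S.BB x v * S.DD y v - S.BB y v * S.DD x v)) :=
    ((S.tendsto_wpq x v).mul (S.tendsto_wpp y v)).sub
      ((S.tendsto_wpq y v).mul (S.tendsto_wpp x v))
  have hR : Tendsto (fun n => (S.a n * (S.P (n+1) x * S.P n y - S.P n x * S.P (n+1) y)) * 1)
      atTop (𝓝 (S.DD x y * 1)) := (S.tendsto_wpp x y).mul_const 1
  have := hL.congr hn
  rw [mul_one] at hR
  exact tendsto_nhds_unique this hR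

end JacobiSetup

namespace JacobiSetup
variable (S : JacobiSetup)

lemma nevD_eq (x y : ℝ) : nevD S (x : ℂ) (y : ℂ) = ((S.DD x y : ℝ) : ℂ) := by
  rw [nevD, DD]
  have h1 : ∀ k : ℕ, S.p k (x:ℂ) * S.p k (y:ℂ) = ((S.P k x * S.P k y : ℝ) : ℂ) := by
    intro k; rw [S.pP, S.pP]; push_cast; ring
  rw [tsum_congr h1, ← Complex.ofReal_tsum]
  push_cast; ring

lemma nevB_eq (x y : ℝ) : nevB S (x : ℂ) (y : ℂ) = ((S.BB x y : ℝ) : ℂ) := by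
  rw [nevB, BB]
  have h1 : ∀ k : ℕ, S.p k (x:ℂ) * S.q k (y:ℂ) = ((S.P k x * S.Q k y : ℝ) : ℂ) := by
    intro k; rw [S.pP, S.qQ]; push_cast; ring
  rw [tsum_congr h1, ← Complex.ofReal_tsum]
  push_cast; ring

end JacobiSetup

namespace JacobiSetup
variable (S : JacobiSetup)

/-- Variation of parameters / perturbation formula. -/
lemma vp (w x : ℝ) (n : ℕ) :
    S.P n x = S.P n w +
      (x - w) * ∑ j ∈ Finset.range n, (S.Q n w * S.P j w - S.P n w * S.Q j w) * S.P j x := by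
  induction n using Nat.twoStepInduction with
  | zero => simp [S.P0]
  | one =>
    norm_num [Finset.sum_range_one, S.P0, S.P1, S.Q0, S.Q1]
    field_simp
    ring
  | more n ih0 ih1 =>
    have ha' : S.a (n+1) ≠ 0 := S.haR (n+1)
    have h1 : S.a (n+1) * S.P (n+2) x = (x - S.b (n+1)) * S.P (n+1) x - S.a n * S.P n x := by
      linear_combination -(S.Prec n x)
    have h2 : S.a (n+1) * S.P (n+2) w = (w - S.b (n+1)) * S.P (n+1) w - S.a n * S.P n w := by
      linear_combination -(S.Prec n w)
    have h3 : S.a (n+1) * ∑ j ∈ Finset.range (n+1),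
          (S.Q (n+2) w * S.P j w - S.P (n+2) w * S.Q j w) * S.P j x
        = (w - S.b (n+1)) * (∑ j ∈ Finset.range (n+1),
            (S.Q (n+1) w * S.P j w - S.P (n+1) w * S.Q j w) * S.P j x)
          - S.a n * (∑ j ∈ Finset.range (n+1),
            (S.Q n w * S.P j w - S.P n w * S.Q j w) * S.P j x) := by
      rw [Finset.mul_sum, Finset.mul_sum, Finset.mul_sum, ← Finset.sum_sub_distrib]
      apply Finset.sum_congr rfl
      intro j _
      have hqw : S.a (n+1) * S.Q (n+2) w = (w - S.b (n+1)) * S.Q (n+1) w - S.a n * S.Q n w := by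
        linear_combination -(S.Qrec n w)
      have hpw : S.a (n+1) * S.P (n+2) w = (w - S.b (n+1)) * S.P (n+1) w - S.a n * S.P n w := h2
      linear_combination (S.P j w * S.P j x) * hqw - (S.Q j w * S.P j x) * hpw
    have h4 : ∑ j ∈ Finset.range (n+1), (S.Q n w * S.P j w - S.P n w * S.Q j w) * S.P j x
        = ∑ j ∈ Finset.range n, (S.Q n w * S.P j w - S.P n w * S.Q j w) * S.P j x := by
      rw [Finset.sum_range_succ]
      have : (S.Q n w * S.P n w - S.P n w * S.Q n w) = 0 := by ring
      rw [this, zero_mul, add_zero]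
    have h5 : S.a (n+1) * (S.Q (n+2) w * S.P (n+1) w - S.P (n+2) w * S.Q (n+1) w) = 1 := by
      linear_combination -(S.wronsk w (n+1))
    apply mul_left_cancel₀ ha'
    rw [Finset.sum_range_succ]
    linear_combination h1 - h2 - (x-w)*h3 - (x-w)*(S.P (n+1) x)*h5
      + (w - S.b (n+1))*ih1 - (S.a n)*ih0 + (S.a n)*(x-w)*h4

end JacobiSetup

namespace JacobiSetup
variable (S : JacobiSetup)

/-- total energy at `w`. -/
def EE (w : ℝ) : ℝ := ∑' k, (S.P k w ^ 2 + S.Q k w ^ 2)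

lemma EE_ge_one (w : ℝ) : 1 ≤ S.EE w := by
  have h0 : S.P 0 w ^ 2 + S.Q 0 w ^ 2 = 1 := by rw [S.P0, S.Q0]; norm_num
  calc (1:ℝ) = S.P 0 w ^ 2 + S.Q 0 w ^ 2 := h0.symm
    _ ≤ S.EE w := Summable.le_tsum (S.sumsq w) 0 (fun i _ => by positivity)

lemma sum_pw_le (w : ℝ) (s : Finset ℕ) : ∑ j ∈ s, S.P j w ^ 2 ≤ S.EE w := by
  calc ∑ j ∈ s, S.P j w ^ 2 ≤ ∑ j ∈ s, (S.P j w ^ 2 + S.Q j w ^ 2) :=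
        Finset.sum_le_sum (fun j _ => by nlinarith [sq_nonneg (S.Q j w)])
    _ ≤ S.EE w := Summable.sum_le_tsum s (fun i _ => by positivity) (S.sumsq w)

lemma sum_qw_le (w : ℝ) (s : Finset ℕ) : ∑ j ∈ s, S.Q j w ^ 2 ≤ S.EE w := by
  calc ∑ j ∈ s, S.Q j w ^ 2 ≤ ∑ j ∈ s, (S.P j w ^ 2 + S.Q j w ^ 2) :=
        Finset.sum_le_sum (fun j _ => by nlinarith [sq_nonneg (S.P j w)])
    _ ≤ S.EE w := Summable.sum_le_tsum s (fun i _ => by positivity) (S.sumsq w)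

/-- Uniform local bound on partial sums of `P k x ^ 2`. -/
lemma bound (w : ℝ) : ∀ x : ℝ, |x - w| ≤ 1 / (3 * S.EE w) → ∀ N : ℕ,
    ∑ k ∈ Finset.range N, S.P k x ^ 2 ≤ 4 * S.EE w := by
  intro x hx N
  set E := S.EE w with hE
  have hE1 : 1 ≤ E := S.EE_ge_one w
  set T := ∑ k ∈ Finset.range N, S.P k x ^ 2 with hT
  have hTnn : 0 ≤ T := Finset.sum_nonneg (fun k _ => sq_nonneg _)
  have key : ∀ n ∈ Finset.range N,
      S.P n x ^ 2 ≤ 2 * S.P n w ^ 2 + 2 * (x-w)^2 * (2 * E * (S.P n w ^ 2 + S.Q n w ^ 2)) * T := by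
    intro n hn
    have hvp := S.vp w x n
    set s := ∑ j ∈ Finset.range n, (S.Q n w * S.P j w - S.P n w * S.Q j w) * S.P j x with hs
    have hcs : s ^ 2 ≤ (∑ j ∈ Finset.range n, (S.Q n w * S.P j w - S.P n w * S.Q j w) ^ 2) *
        (∑ j ∈ Finset.range n, S.P j x ^ 2) :=
      Finset.sum_mul_sq_le_sq_mul_sq _ _ _
    have hK : ∑ j ∈ Finset.range n, (S.Q n w * S.P j w - S.P n w * S.Q j w) ^ 2 ≤
        2 * E * (S.P n w ^ 2 + S.Q n w ^ 2) := by
      have h1 : ∀ j ∈ Finset.range n, (S.Q n w * S.P j w - S.P n w * S.Q j w) ^ 2 ≤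
          2 * S.Q n w ^ 2 * S.P j w ^ 2 + 2 * S.P n w ^ 2 * S.Q j w ^ 2 := by
        intro j _
        nlinarith [sq_nonneg (S.Q n w * S.P j w + S.P n w * S.Q j w)]
      calc ∑ j ∈ Finset.range n, (S.Q n w * S.P j w - S.P n w * S.Q j w) ^ 2
          ≤ ∑ j ∈ Finset.range n, (2 * S.Q n w ^ 2 * S.P j w ^ 2 + 2 * S.P n w ^ 2 * S.Q j w ^ 2) :=
            Finset.sum_le_sum h1
        _ = 2 * S.Q n w ^ 2 * ∑ j ∈ Finset.range n, S.P j w ^ 2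
            + 2 * S.P n w ^ 2 * ∑ j ∈ Finset.range n, S.Q j w ^ 2 := by
            rw [Finset.mul_sum, Finset.mul_sum, ← Finset.sum_add_distrib]
        _ ≤ 2 * S.Q n w ^ 2 * E + 2 * S.P n w ^ 2 * E := by
            have := S.sum_pw_le w (Finset.range n)
            have := S.sum_qw_le w (Finset.range n)
            nlinarith [sq_nonneg (S.P n w), sq_nonneg (S.Q n w)]
        _ = 2 * E * (S.P n w ^ 2 + S.Q n w ^ 2) := by ring
    have hsub : ∑ j ∈ Finset.range n, S.P j x ^ 2 ≤ T := by
      apply Finset.sum_le_sum_of_subset_of_nonneg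
      · exact Finset.range_subset_range.mpr (le_of_lt (Finset.mem_range.mp hn))
      · intro i _ _; exact sq_nonneg _
    have hs2 : s ^ 2 ≤ 2 * E * (S.P n w ^ 2 + S.Q n w ^ 2) * T := by
      have hnn : (0:ℝ) ≤ ∑ j ∈ Finset.range n, (S.Q n w * S.P j w - S.P n w * S.Q j w) ^ 2 :=
        Finset.sum_nonneg (fun j _ => sq_nonneg _)
      have hnn2 : (0:ℝ) ≤ ∑ j ∈ Finset.range n, S.P j x ^ 2 :=
        Finset.sum_nonneg (fun j _ => sq_nonneg _)
      nlinarith [sq_nonneg s]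
    -- P n x = P n w + (x-w) * s
    have : S.P n x ^ 2 ≤ 2 * S.P n w ^ 2 + 2 * ((x-w) * s) ^ 2 := by
      rw [hvp]; nlinarith [sq_nonneg (S.P n w - (x-w) * s)]
    calc S.P n x ^ 2 ≤ 2 * S.P n w ^ 2 + 2 * ((x-w) * s) ^ 2 := this
      _ ≤ 2 * S.P n w ^ 2 + 2 * (x-w)^2 * (2 * E * (S.P n w ^ 2 + S.Q n w ^ 2)) * T := by
          have h2 : ((x-w) * s) ^ 2 = (x-w)^2 * s^2 := by ring
          nlinarith [sq_nonneg (x-w)]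
  have hsumkey : T ≤ 2 * E + 4 * (x-w)^2 * E^2 * T := by
    have := Finset.sum_le_sum key
    rw [← hT] at this
    have hsplit : ∑ n ∈ Finset.range N,
        (2 * S.P n w ^ 2 + 2 * (x-w)^2 * (2 * E * (S.P n w ^ 2 + S.Q n w ^ 2)) * T)
        = 2 * (∑ n ∈ Finset.range N, S.P n w ^ 2)
          + 4 * (x-w)^2 * E * T * (∑ n ∈ Finset.range N, (S.P n w ^ 2 + S.Q n w ^ 2)) := by
      rw [Finset.mul_sum, Finset.mul_sum, ← Finset.sum_add_distrib]
      apply Finset.sum_congr rfl; intro n _; ring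
    rw [hsplit] at this
    have h1 : ∑ n ∈ Finset.range N, S.P n w ^ 2 ≤ E := S.sum_pw_le w _
    have h2 : ∑ n ∈ Finset.range N, (S.P n w ^ 2 + S.Q n w ^ 2) ≤ E :=
      Summable.sum_le_tsum _ (fun i _ => by positivity) (S.sumsq w)
    have h2nn : (0:ℝ) ≤ ∑ n ∈ Finset.range N, (S.P n w ^ 2 + S.Q n w ^ 2) :=
      Finset.sum_nonneg (fun n _ => by positivity)
    nlinarith [sq_nonneg (x-w), mul_nonneg (mul_nonneg (sq_nonneg (x-w)) (le_trans zero_le_one hE1)) hTnn]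
  -- now |x - w| ≤ 1/(3E) gives 4 (x-w)^2 E^2 ≤ 4/9
  have hEpos : (0:ℝ) < E := lt_of_lt_of_le one_pos hE1
  have h3E : (0:ℝ) < 3 * E := by nlinarith
  have hx1 : |x - w| * (3 * E) ≤ 1 := (le_div_iff₀ h3E).mp hx
  have hd : 9 * E^2 * (x-w)^2 ≤ 1 := by
    have h2 := mul_le_mul hx1 hx1 (by positivity) (by norm_num)
    nlinarith [h2, sq_abs (x-w)]
  nlinarith [hsumkey, mul_le_mul_of_nonneg_right hd hTnn, hTnn, hEpos]

end JacobiSetup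

namespace JacobiSetup
variable (S : JacobiSetup)

lemma bound' (w : ℝ) : ∀ x : ℝ, |x - w| ≤ 1 / (3 * S.EE w) →
    ∑' k, S.P k x ^ 2 ≤ 4 * S.EE w := by
  intro x hx
  exact Real.tsum_le_of_sum_range_le (fun n => sq_nonneg _) (S.bound w x hx)

set_option maxHeartbeats 1000000 in
/-- Continuity of `x ↦ ∑' k, P k x * c k` for square-summable `c`. -/
lemma contF (c : ℕ → ℝ) (hc : Summable fun k => c k ^ 2) (w : ℝ) :
    ContinuousAt (fun x => ∑' k, S.P k x * c k) w := by
  set E := S.EE w with hE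
  have hE1 : 1 ≤ E := S.EE_ge_one w
  have hEpos : (0:ℝ) < E := lt_of_lt_of_le one_pos hE1
  set δ := 1 / (3 * E) with hδ
  have hδpos : 0 < δ := by positivity
  set M := 4 * E with hM
  have hMpos : (0:ℝ) < M := by positivity
  rw [ContinuousAt, Metric.tendsto_nhds]
  intro ε hε
  set η := ε / (6 * (M + 1)) with hη
  have hηpos : 0 < η := by positivity
  -- pick N with tail of c small
  have htail : Tendsto (fun N => ∑' k, c (k + N) ^ 2) atTop (𝓝 0) :=
    tendsto_sum_nat_add (fun k => c k ^ 2)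
  have hev : ∀ᶠ N in atTop, ∑' k, c (k + N) ^ 2 < η * ε / 3 :=
    htail.eventually (gt_mem_nhds (by positivity))
  obtain ⟨N, hN⟩ := hev.exists
  -- the tail estimate, uniform on the δ-ball
  have tailest : ∀ x : ℝ, |x - w| ≤ δ →
      |∑' k, S.P k x * c k - ∑ k ∈ Finset.range N, S.P k x * c k| ≤ ε / 3 := by
    intro x hx
    have hsx : Summable fun k => S.P k x * c k := summul (S.sumsqP x) hc
    have hshift : Summable fun k => S.P (k + N) x * c (k + N) := by
      exact ((summable_nat_add_iff N).mpr hsx)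
    have hPx2 : Summable fun k => S.P (k + N) x ^ 2 := (summable_nat_add_iff N).mpr (S.sumsqP x)
    have hc2 : Summable fun k => c (k + N) ^ 2 := (summable_nat_add_iff N).mpr hc
    have heq : ∑' k, S.P k x * c k - ∑ k ∈ Finset.range N, S.P k x * c k
        = ∑' k, S.P (k + N) x * c (k + N) := by
      have := Summable.sum_add_tsum_nat_add N hsx
      linarith
    rw [heq]
    have habs : |∑' k, S.P (k + N) x * c (k + N)| ≤ ∑' k, |S.P (k + N) x * c (k + N)| := by
      have h' : Summable fun k => ‖S.P (k + N) x * c (k + N)‖ := by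
        simp only [Real.norm_eq_abs]
        exact hshift.abs
      have := norm_tsum_le_tsum_norm h'
      simp only [Real.norm_eq_abs] at this
      exact this
    have hptwise : ∀ k, |S.P (k + N) x * c (k + N)| ≤
        (η * S.P (k + N) x ^ 2 + c (k + N) ^ 2 / η) / 2 := by
      intro k
      have h1 : |S.P (k + N) x * c (k + N)| = |S.P (k + N) x| * |c (k + N)| := abs_mul _ _
      have gen : ∀ p q : ℝ, p * q ≤ (η * p^2 + q^2/η)/2 := by
        intro p q
        have e : (η * p^2 + q^2/η)/2 - p * q = (η * p - q)^2/(2*η) := by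
          field_simp
          ring
        have e2 : (0:ℝ) ≤ (η * p - q)^2/(2*η) := div_nonneg (sq_nonneg _) (by positivity)
        linarith
      have := gen (|S.P (k+N) x|) (|c (k+N)|)
      rw [h1]
      simpa [sq_abs] using this
    have hsummajor : Summable fun k => (η * S.P (k + N) x ^ 2 + c (k + N) ^ 2 / η) / 2 := by
      apply Summable.mul_right
      exact (hPx2.mul_left η).add (hc2.div_const η)
    have h2 : ∑' k, |S.P (k + N) x * c (k + N)| ≤
        ∑' k, (η * S.P (k + N) x ^ 2 + c (k + N) ^ 2 / η) / 2 := by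
      apply Summable.tsum_le_tsum hptwise _ hsummajor
      exact hshift.abs
    have h3 : ∑' k, (η * S.P (k + N) x ^ 2 + c (k + N) ^ 2 / η) / 2
        = (η * ∑' k, S.P (k + N) x ^ 2 + (∑' k, c (k + N) ^ 2) / η) / 2 := by
      rw [tsum_div_const, Summable.tsum_add (hPx2.mul_left η) (hc2.div_const η),
        tsum_mul_left, tsum_div_const]
    have hPxle : ∑' k, S.P (k + N) x ^ 2 ≤ M := by
      have hfull := S.bound' w x hx
      have := Summable.sum_add_tsum_nat_add N (S.sumsqP x)
      have hnn : 0 ≤ ∑ k ∈ Finset.range N, S.P k x ^ 2 :=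
        Finset.sum_nonneg (fun k _ => sq_nonneg _)
      linarith
    have htl : ∑' k, c (k + N) ^ 2 ≤ η * ε / 3 := le_of_lt hN
    have hfinal : (η * ∑' k, S.P (k + N) x ^ 2 + (∑' k, c (k + N) ^ 2) / η) / 2 ≤ ε / 3 := by
      have h4 : η * ∑' k, S.P (k + N) x ^ 2 ≤ η * M :=
        mul_le_mul_of_nonneg_left hPxle (le_of_lt hηpos)
      have h5 : (∑' k, c (k + N) ^ 2) / η ≤ ε / 3 := by
        rw [div_le_iff₀ hηpos]
        calc ∑' k, c (k + N) ^ 2 ≤ η * ε / 3 := htl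
          _ = ε / 3 * η := by ring
      have h6 : η * M ≤ ε / 6 := by
        rw [hη]
        rw [div_mul_eq_mul_div, div_le_div_iff₀ (by positivity) (by norm_num)]
        nlinarith
      linarith
    calc |∑' k, S.P (k + N) x * c (k + N)| ≤ _ := habs
      _ ≤ _ := h2
      _ = _ := h3
      _ ≤ ε / 3 := hfinal
  -- continuity of the partial sum
  have hcont : ContinuousAt (fun x => ∑ k ∈ Finset.range N, S.P k x * c k) w := by
    apply Continuous.continuousAt
    apply continuous_finset_sum
    intro k _
    exact (S.contP k).mul continuous_const
  have hev2 : ∀ᶠ x in 𝓝 w, |(∑ k ∈ Finset.range N, S.P k x * c k) -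
      (∑ k ∈ Finset.range N, S.P k w * c k)| < ε / 3 := by
    have := hcont
    rw [ContinuousAt, Metric.tendsto_nhds] at this
    have h := this (ε/3) (by positivity)
    simpa [Real.dist_eq] using h
  have hev3 : ∀ᶠ x in 𝓝 w, |x - w| ≤ δ := by
    have : Metric.closedBall w δ ∈ 𝓝 w := Metric.closedBall_mem_nhds w hδpos
    filter_upwards [this] with x hx
    simpa [Real.dist_eq, Metric.mem_closedBall] using hx
  filter_upwards [hev2, hev3] with x h2 h3
  rw [Real.dist_eq]
  have t1 := tailest x h3
  have t2 := tailest w (by simp [abs_nonneg, le_of_lt hδpos])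
  calc |∑' k, S.P k x * c k - ∑' k, S.P k w * c k| ≤
      |∑' k, S.P k x * c k - ∑ k ∈ Finset.range N, S.P k x * c k|
      + |(∑ k ∈ Finset.range N, S.P k x * c k) - (∑ k ∈ Finset.range N, S.P k w * c k)|
      + |∑ k ∈ Finset.range N, S.P k w * c k - ∑' k, S.P k w * c k| := by
        have := abs_sub_le (∑' k, S.P k x * c k) (∑ k ∈ Finset.range N, S.P k x * c k)
          (∑' k, S.P k w * c k)
        have h4 := abs_sub_le (∑ k ∈ Finset.range N, S.P k x * c k)
          (∑ k ∈ Finset.range N, S.P k w * c k) (∑' k, S.P k w * c k)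
        linarith
    _ < ε := by
        rw [abs_sub_comm] at t2
        linarith

end JacobiSetup

/-- If `v ∈ ℝ`, `u ∈ ℝ` with `D(u,v) = 0`, `u < v` and `D(x,v) ≠ 0` on `(u,v)`, then
`B(u,v)` is a positive real number. -/
theorem stmt5 (S : JacobiSetup) (u v : ℝ) (huv : u < v)
    (hD : nevD S (u : ℂ) (v : ℂ) = 0)
    (hne : ∀ x : ℝ, u < x → x < v → nevD S (x : ℂ) (v : ℂ) ≠ 0) :
    ∃ r : ℝ, 0 < r ∧ nevB S (u : ℂ) (v : ℂ) = (r : ℂ) := by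
  -- real forms
  have hDuv : S.DD u v = 0 := by
    have := S.nevD_eq u v
    rw [hD] at this
    exact_mod_cast this.symm
  have hneR : ∀ y : ℝ, u < y → y < v → S.DD y v ≠ 0 := by
    intro y h1 h2 h3
    apply hne y h1 h2
    rw [S.nevD_eq y v, h3]
    norm_num
  -- continuity of the relevant functions
  have hg0 : Continuous (fun y => ∑' k, S.P k y * S.P k v) := by
    rw [continuous_iff_continuousAt]
    intro w
    exact S.contF (fun k => S.P k v) (S.sumsqP v) w
  have hf : Continuous (fun y => S.DD y v) := by
    have : (fun y => S.DD y v) = fun y => (y - v) * ∑' k, S.P k y * S.P k v := rfl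
    rw [this]
    exact (continuous_id.sub continuous_const).mul hg0
  have hG : Continuous (fun y => ∑' k, S.P k y * S.P k u) := by
    rw [continuous_iff_continuousAt]
    intro w
    exact S.contF (fun k => S.P k u) (S.sumsqP u) w
  -- g0 v ≥ 1
  have hg0v : 1 ≤ ∑' k, S.P k v * S.P k v := by
    have h0 : S.P 0 v * S.P 0 v = 1 := by rw [S.P0]; norm_num
    calc (1:ℝ) = S.P 0 v * S.P 0 v := h0.symm
      _ ≤ _ := Summable.le_tsum (S.sumPP v v) 0 (fun i _ => mul_self_nonneg _)
  have hGu : 1 ≤ ∑' k, S.P k u * S.P k u := by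
    have h0 : S.P 0 u * S.P 0 u = 1 := by rw [S.P0]; norm_num
    calc (1:ℝ) = S.P 0 u * S.P 0 u := h0.symm
      _ ≤ _ := Summable.le_tsum (S.sumPP u u) 0 (fun i _ => mul_self_nonneg _)
  -- near v, g0 > 0 so DD y v < 0 just below v
  have hev1 : ∀ᶠ y in 𝓝 v, 0 < ∑' k, S.P k y * S.P k v :=
    (hg0.continuousAt (x := v)).eventually (eventually_gt_nhds (lt_of_lt_of_le one_pos hg0v))
  have hIoo1 : Set.Ioo u v ∈ 𝓝[<] v := Ioo_mem_nhdsLT_of_mem ⟨huv, le_refl v⟩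
  obtain ⟨y1, hy1pos, hy1Ioo⟩ :=
    ((hev1.filter_mono nhdsWithin_le_nhds).and (eventually_of_mem hIoo1 (fun y hy => hy))).exists
  have hfy1 : S.DD y1 v < 0 := by
    have : S.DD y1 v = (y1 - v) * ∑' k, S.P k y1 * S.P k v := rfl
    rw [this]
    exact mul_neg_of_neg_of_pos (by linarith [hy1Ioo.2]) hy1pos
  -- DD y v < 0 throughout (u, v)
  have hfneg : ∀ y : ℝ, u < y → y < v → S.DD y v < 0 := by
    intro y hyu hyv
    rcases lt_trichotomy (S.DD y v) 0 with h | h | h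
    · exact h
    · exact absurd h (hneR y hyu hyv)
    · exfalso
      have hcont : ContinuousOn (fun t => S.DD t v) (Set.uIcc y y1) := hf.continuousOn
      have hmem : (0:ℝ) ∈ Set.uIcc (S.DD y v) (S.DD y1 v) :=
        Set.mem_uIcc.mpr (Or.inr ⟨le_of_lt hfy1, le_of_lt h⟩)
      obtain ⟨z, hz, hz0⟩ := intermediate_value_uIcc hcont hmem
      have hzIoo : z ∈ Set.Ioo u v := by
        have hsub : Set.uIcc y y1 ⊆ Set.Ioo u v :=
          (Set.ordConnected_Ioo).uIcc_subset ⟨hyu, hyv⟩ hy1Ioo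
        exact hsub hz
      exact hneR z hzIoo.1 hzIoo.2 hz0
  -- pick y2 near u in (u, v) with G y2 > 0
  have hev2 : ∀ᶠ y in 𝓝 u, 0 < ∑' k, S.P k y * S.P k u :=
    (hG.continuousAt (x := u)).eventually (eventually_gt_nhds (lt_of_lt_of_le one_pos hGu))
  have hIoo2 : Set.Ioo u v ∈ 𝓝[>] u := Ioo_mem_nhdsGT_of_mem ⟨le_refl u, huv⟩
  obtain ⟨y2, hy2pos, hy2Ioo⟩ :=
    ((hev2.filter_mono nhdsWithin_le_nhds).and (eventually_of_mem hIoo2 (fun y hy => hy))).exists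
  -- key identity
  have hkey := S.keyid u y2 v
  rw [hDuv, mul_zero, sub_zero] at hkey
  have hDy2v : S.DD y2 v < 0 := hfneg y2 hy2Ioo.1 hy2Ioo.2
  have hDuy2 : S.DD u y2 < 0 := by
    have h1 : S.DD u y2 = (u - y2) * ∑' k, S.P k u * S.P k y2 := rfl
    have h2 : ∑' k, S.P k u * S.P k y2 = ∑' k, S.P k y2 * S.P k u :=
      tsum_congr (fun k => mul_comm _ _)
    rw [h1, h2]
    exact mul_neg_of_neg_of_pos (by linarith [hy2Ioo.1]) hy2pos
  have hBB : S.BB u v = S.DD u y2 / S.DD y2 v := (eq_div_iff (ne_of_lt hDy2v)).mpr hkey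
  have hBBpos : 0 < S.BB u v := by
    rw [hBB]
    exact div_pos_of_neg_of_neg hDuy2 hDy2v
  exact ⟨S.BB u v, hBBpos, S.nevB_eq u v⟩
end
end
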